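/- arXiv:math/0003020 — 4 statements merged into one kernel-verified Lean document; each statement's English description precedes it below -/
import Mathlib

section
/- There exists a continuous 2-homogeneous polynomial P : c₀ → c₀ such that P(eₙ) = 0 for every n ∈ ℕ, and yet for every sequence (xₙ) in c₀ equivalent to the c₀-basis, the sequence of values (P(∑_{i=1}^n x_i))ₙ is not relatively compact in c₀ (it has no norm-convergent subsequence). -/
open Filter Topology Metric
set_option maxHeartbeats 1000000

noncomputable section

/-- The Banach space `c₀` of real sequences converging to zero, with the sup norm. -/
abbrev c0 : Type := ZeroAtInftyContinuousMap ℕ ℝ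

/-- The unit vector basis of `c₀`. -/
def e (n : ℕ) : c0 :=
  { toFun := fun i => if i = n then (1 : ℝ) else 0
    continuous_toFun := continuous_of_discreteTopology
    zero_at_infty' := by
      rw [Filter.cocompact_eq_cofinite]
      refine tendsto_const_nhds.congr' ?_
      have h : {n}ᶜ ∈ (Filter.cofinite : Filter ℕ) := by simp [Filter.cofinite]
      filter_upwards [h] with i hi
      simp only [Set.mem_compl_iff, Set.mem_singleton_iff] at hi
      simp [hi] }

/-- A series `∑ xₙ` is weakly unconditionally Cauchy (w.u.C.) if `∑ |φ (xₙ)| < ∞` for every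
continuous linear functional `φ`. -/
def WUC {X : Type*} [NormedAddCommGroup X] [NormedSpace ℝ X] (x : ℕ → X) : Prop :=
  ∀ φ : X →L[ℝ] ℝ, Summable fun n => |φ (x n)|

/-- A sequence is equivalent to the unit vector basis of `c₀`: there are `0 < c ≤ C` with
`c · maxᵢ |aᵢ| ≤ ‖∑ aᵢ xᵢ‖ ≤ C · maxᵢ |aᵢ|` for all finite scalar families. -/
def IsEquivC0Basis {X : Type*} [NormedAddCommGroup X] [NormedSpace ℝ X] (x : ℕ → X) : Prop :=
  ∃ c C : ℝ, 0 < c ∧ c ≤ C ∧ ∀ (n : ℕ) (a : ℕ → ℝ),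
    c * (⨆ i : Fin n, |a i|) ≤ ‖∑ i ∈ Finset.range n, a i • x i‖ ∧
    ‖∑ i ∈ Finset.range n, a i • x i‖ ≤ C * (⨆ i : Fin n, |a i|)

/-- A map (polynomial) is unconditionally converging if for every w.u.C. series `∑ xₙ` the
sequence of values at the partial sums converges in norm. -/
def UCPoly {X Y : Type*} [NormedAddCommGroup X] [NormedSpace ℝ X]
    [NormedAddCommGroup Y] [NormedSpace ℝ Y] (P : X → Y) : Prop :=
  ∀ x : ℕ → X, WUC x →
    ∃ L : Y, Tendsto (fun n => P (∑ i ∈ Finset.range n, x i)) atTop (𝓝 L)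

/-- An operator is unconditionally converging if it maps w.u.C. series to unconditionally
convergent series. -/
def UCOp {X Y : Type*} [NormedAddCommGroup X] [NormedSpace ℝ X]
    [NormedAddCommGroup Y] [NormedSpace ℝ Y] (T : X → Y) : Prop :=
  ∀ x : ℕ → X, WUC x → Summable fun n => T (x n)

/-- A map (polynomial or operator) is compact if the image of the closed unit ball is
relatively norm compact. -/
def CompactMap {X Y : Type*} [NormedAddCommGroup X] [NormedSpace ℝ X]
    [NormedAddCommGroup Y] [NormedSpace ℝ Y] (P : X → Y) : Prop :=
  IsCompact (closure (P '' Metric.closedBall 0 1))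

/-- A set is relatively weakly compact if its closure in the weak topology is compact. -/
def RelWeakCompact {Y : Type*} [NormedAddCommGroup Y] [NormedSpace ℝ Y] (s : Set Y) : Prop :=
  IsCompact (closure ((toWeakSpace ℝ Y) '' s))

/-- A WUC-set is the image of the closed unit ball of `c₀` under a bounded operator. -/
def IsWUCSet {X : Type*} [NormedAddCommGroup X] [NormedSpace ℝ X] (s : Set X) : Prop :=
  ∃ T : c0 →L[ℝ] X, s = ⇑T '' Metric.closedBall 0 1


lemma c0_abs_le (f : c0) (k : ℕ) : |f k| ≤ ‖f‖ := by
  rw [← ZeroAtInftyContinuousMap.norm_toBCF_eq_norm, ← Real.norm_eq_abs]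
  exact f.toBCF.norm_coe_le_norm k

lemma c0_norm_le (f : c0) (b : ℝ) (hb : 0 ≤ b) (h : ∀ k, |f k| ≤ b) : ‖f‖ ≤ b := by
  rw [← ZeroAtInftyContinuousMap.norm_toBCF_eq_norm]
  exact BoundedContinuousFunction.norm_le hb |>.2 (by simpa [Real.norm_eq_abs] using h)

def c0eval (k : ℕ) : c0 →+ ℝ :=
  AddMonoidHom.mk' (fun f => f k) (by intro a b; simp [ZeroAtInftyContinuousMap.coe_add])

lemma c0_sum_apply (F : Finset ℕ) (g : ℕ → c0) (k : ℕ) :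
    (∑ i ∈ F, g i) k = ∑ i ∈ F, g i k := by
  exact map_sum (c0eval k) g F

lemma c0_smul_apply (r : ℝ) (f : c0) (k : ℕ) : (r • f) k = r * f k := rfl

def pk (k : ℕ) : ℕ := k.unpair.1
def qk (k : ℕ) : ℕ := k.unpair.1 + k.unpair.2 + 1

lemma pk_lt_qk (k : ℕ) : pk k < qk k := by simp [pk, qk]

lemma exists_pair (p q : ℕ) (h : p < q) : ∃ k, pk k = p ∧ qk k = q := by
  refine ⟨Nat.pair p (q - p - 1), ?_⟩
  simp [pk, qk, Nat.unpair_pair]; omega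

lemma qk_tendsto : Tendsto qk cofinite atTop := by
  refine tendsto_atTop.2 fun b => ?_
  rw [Filter.eventually_cofinite]
  have : {k | ¬ b ≤ qk k} ⊆ (fun p : ℕ × ℕ => Nat.pair p.1 p.2) '' (Set.Iio b ×ˢ Set.Iio b) := by
    intro k hk
    simp only [Set.mem_setOf_eq, not_le] at hk
    refine ⟨(k.unpair.1, k.unpair.2), ?_, Nat.pair_unpair k⟩
    simp only [Set.mem_prod, Set.mem_Iio]
    unfold qk at hk; omega
  exact (((Set.finite_Iio b).prod (Set.finite_Iio b)).image _).subset this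

def mulPair (x y : c0) : c0 :=
  { toFun := fun k => x (pk k) * y (qk k)
    continuous_toFun := continuous_of_discreteTopology
    zero_at_infty' := by
      rw [Filter.cocompact_eq_cofinite]
      rw [tendsto_zero_iff_norm_tendsto_zero]
      refine squeeze_zero (g := fun k => ‖x‖ * ‖y (qk k)‖) (fun k => norm_nonneg _)
        (fun k => ?_) ?_
      · show ‖x (pk k) * y (qk k)‖ ≤ ‖x‖ * ‖y (qk k)‖
        rw [norm_mul]
        gcongr
        simpa [Real.norm_eq_abs] using c0_abs_le x (pk k)
      · have h1 : Tendsto (fun k => y (qk k)) cofinite (𝓝 0) := by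
          have h0 := y.zero_at_infty'
          rw [Filter.cocompact_eq_cofinite] at h0
          have hq := qk_tendsto
          rw [← Nat.cofinite_eq_atTop] at hq
          exact h0.comp hq
        simpa using (h1.norm.const_mul ‖x‖) }

@[simp] lemma mulPair_apply (x y : c0) (k : ℕ) : mulPair x y k = x (pk k) * y (qk k) := rfl

def Amap : MultilinearMap ℝ (fun _ : Fin 2 => c0) c0 where
  toFun m := mulPair (m 0) (m 1)
  map_update_add' m i a b := by
    ext k
    fin_cases i <;>
      simp [ZeroAtInftyContinuousMap.coe_add, Function.update, Fin.ext_iff] <;> ring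
  map_update_smul' m i r a := by
    ext k
    fin_cases i <;>
      simp [ZeroAtInftyContinuousMap.coe_smul, Function.update, Fin.ext_iff, c0_smul_apply] <;> ring

def Apoly : ContinuousMultilinearMap ℝ (fun _ : Fin 2 => c0) c0 :=
  Amap.mkContinuous 1 (by
    intro m
    rw [one_mul, Fin.prod_univ_two]
    refine c0_norm_le _ _ (by positivity) fun k => ?_
    show |(m 0) (pk k) * (m 1) (qk k)| ≤ ‖m 0‖ * ‖m 1‖
    rw [abs_mul]
    exact mul_le_mul (c0_abs_le _ _) (c0_abs_le _ _) (abs_nonneg _) (norm_nonneg _))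

@[simp] lemma Apoly_apply (m : Fin 2 → c0) (k : ℕ) :
    Apoly m k = (m 0) (pk k) * (m 1) (qk k) := rfl

section Main

variable {x : ℕ → c0} {c C : ℝ}

/-- partial sums -/
def S (x : ℕ → c0) (n : ℕ) : c0 := ∑ i ∈ Finset.range n, x i

lemma S_apply (x : ℕ → c0) (n j : ℕ) : S x n j = ∑ i ∈ Finset.range n, x i j := by
  simpa [S] using c0_sum_apply (Finset.range n) x j

variable (hc : 0 < c)
  (hx : ∀ (n : ℕ) (a : ℕ → ℝ),
    c * (⨆ i : Fin n, |a i|) ≤ ‖∑ i ∈ Finset.range n, a i • x i‖ ∧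
    ‖∑ i ∈ Finset.range n, a i • x i‖ ≤ C * (⨆ i : Fin n, |a i|))

include hc hx

lemma factD : ∀ n, ‖S x n‖ ≤ C := by
  intro n
  rcases Nat.eq_zero_or_pos n with h | h
  · subst h
    simp only [S, Finset.range_zero, Finset.sum_empty, norm_zero]
    have h1 := (hx 1 fun _ => 1).1
    have h2 : (⨆ i : Fin 1, |(1:ℝ)|) = 1 := by simp
    nlinarith [norm_nonneg (∑ i ∈ Finset.range 1, (1:ℝ) • x i), (hx 1 fun _ => 1).2]
  · have := (hx n fun _ => 1).2
    have hne : Nonempty (Fin n) := ⟨⟨0, h⟩⟩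
    rw [ciSup_const] at this
    simpa [abs_one, S] using this

lemma factA : ∀ (j : ℕ) (F : Finset ℕ), ∑ i ∈ F, |x i j| ≤ C := by
  intro j F
  rcases F.eq_empty_or_nonempty with rfl | hF
  · simp
    have h1 := factD (x := x) hc hx 0
    exact le_trans (norm_nonneg _) h1
  · set n := F.sup id + 1 with hn
    have hFn : F ⊆ Finset.range n := by
      intro i hi
      simp only [Finset.mem_range, hn]
      exact Nat.lt_succ_of_le (Finset.le_sup (f := id) hi)
    set a : ℕ → ℝ := fun i => if i ∈ F then (if 0 ≤ x i j then 1 else -1) else 0 with ha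
    have hsup : (⨆ i : Fin n, |a i|) ≤ 1 := by
      have : Nonempty (Fin n) := ⟨⟨0, Nat.succ_pos _⟩⟩
      refine ciSup_le fun i => ?_
      simp only [ha]
      split_ifs <;> simp
    have hub := (hx n a).2
    have hval : (∑ i ∈ Finset.range n, a i • x i) j = ∑ i ∈ F, |x i j| := by
      rw [c0_sum_apply]
      rw [← Finset.sum_subset hFn (fun i _ hiF => by simp [c0_smul_apply, ha, hiF])]
      refine Finset.sum_congr rfl fun i hi => ?_
      rw [c0_smul_apply]
      simp only [ha, hi, if_true]
      split_ifs with h0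
      · rw [one_mul, abs_of_nonneg h0]
      · rw [neg_one_mul, abs_of_neg (lt_of_not_ge h0)]
    calc ∑ i ∈ F, |x i j| = (∑ i ∈ Finset.range n, a i • x i) j := hval.symm
      _ ≤ |(∑ i ∈ Finset.range n, a i • x i) j| := le_abs_self _
      _ ≤ ‖∑ i ∈ Finset.range n, a i • x i‖ := c0_abs_le _ _
      _ ≤ C * (⨆ i : Fin n, |a i|) := hub
      _ ≤ C * 1 := by
          have hC0 : 0 ≤ C := le_trans (norm_nonneg _) (factD (x := x) hc hx 0)
          exact mul_le_mul_of_nonneg_left hsup hC0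
      _ = C := mul_one C

lemma factB : ∀ j, Summable fun i => |x i j| := fun j =>
  summable_of_sum_range_le (fun i => abs_nonneg _)
    (fun n => factA (x := x) hc hx j (Finset.range n))

/-- coordinatewise limit of the partial sums -/
def tl (x : ℕ → c0) (j : ℕ) : ℝ := ∑' i, x i j

lemma tendsto_S : ∀ j, Tendsto (fun n => S x n j) atTop (𝓝 (tl x j)) := by
  intro j
  have hs : Summable fun i => x i j := (factB (x := x) hc hx j).of_abs
  have := hs.hasSum.tendsto_sum_nat
  refine this.congr fun n => (S_apply x n j).symm

end Main
section MainLemma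

variable {x : ℕ → c0} {c C : ℝ}

lemma mainlemma (hc : 0 < c)
    (hx : ∀ (n : ℕ) (a : ℕ → ℝ),
      c * (⨆ i : Fin n, |a i|) ≤ ‖∑ i ∈ Finset.range n, a i • x i‖ ∧
      ‖∑ i ∈ Finset.range n, a i • x i‖ ≤ C * (⨆ i : Fin n, |a i|)) (N : ℕ) :
    ∃ n p q, N ≤ p ∧ N ≤ q ∧ p ≠ q ∧ c/16 ≤ |S x n p| ∧ c/16 ≤ |S x n q| := by
  classical
  have hC0 : 0 ≤ C := le_trans (norm_nonneg _) (factD hc hx 0)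
  by_contra hcon
  push_neg at hcon
  -- `hcon : ∀ n p q, N ≤ p → N ≤ q → p ≠ q → c/16 ≤ |S x n p| → |S x n q| < c/16`
  set r : ℕ := max 1 ⌈8*C/c⌉₊ with hrdef
  have hr1 : 1 ≤ r := le_max_left _ _
  have hr0 : (0:ℝ) < r := by exact_mod_cast hr1
  have hrC : 2*C/(r:ℝ) ≤ c/4 := by
    have h1 : 8*C/c ≤ (⌈8*C/c⌉₊ : ℝ) := Nat.le_ceil _
    have h2 : ((⌈8*C/c⌉₊ : ℕ) : ℝ) ≤ (r:ℝ) := by exact_mod_cast le_max_right 1 ⌈8*C/c⌉₊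
    have h3 : 8*C/c ≤ (r:ℝ) := le_trans h1 h2
    rw [div_le_iff₀ hc] at h3
    rw [div_le_iff₀ hr0]
    nlinarith
  -- Q : far coordinates where the limit is big
  set Q : Set ℕ := {q | N ≤ q ∧ c/16 < |tl x q|} with hQdef
  have hQ : Q.Subsingleton := by
    intro q1 h1 q2 h2
    by_contra hne
    have e1 : ∀ᶠ n in atTop, c/16 < |S x n q1| :=
      (tendsto_S hc hx q1).abs.eventually_const_lt h1.2
    have e2 : ∀ᶠ n in atTop, c/16 < |S x n q2| :=
      (tendsto_S hc hx q2).abs.eventually_const_lt h2.2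
    obtain ⟨n, hn1, hn2⟩ := (e1.and e2).exists
    exact absurd (hcon n q1 q2 h1.1 h2.1 hne hn1.le) (not_lt.2 hn2.le)
  have hfar : ∀ q, N ≤ q → q ∉ Q → |tl x q| ≤ c/16 := by
    intro q hqN hqQ
    by_contra h
    exact hqQ ⟨hqN, lt_of_not_ge h⟩
  -- bad-time bound for each time i
  have h_ex : ∀ i : ℕ, ∃ m, ∀ n, m ≤ n → ∀ q, N ≤ q → q ∉ Q →
      c/8 ≤ |S x i q| → |S x n q| < c/8 := by
    intro i
    by_cases hD : ∃ q0, N ≤ q0 ∧ q0 ∉ Q ∧ c/8 ≤ |S x i q0|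
    · obtain ⟨q0, hq0N, hq0Q, hq0big⟩ := hD
      have ht0 : |tl x q0| ≤ c/16 := hfar q0 hq0N hq0Q
      have : ∀ᶠ n in atTop, |S x n q0| < c/8 :=
        (tendsto_S hc hx q0).abs.eventually_lt_const (by linarith)
      obtain ⟨m, hm⟩ := eventually_atTop.1 this
      refine ⟨m, fun n hn q hqN hqQ hqbig => ?_⟩
      have hqq0 : q = q0 := by
        by_contra hne
        exact absurd (hcon i q q0 hqN hq0N hne (by linarith)) (not_lt.2 (by linarith))
      subst hqq0
      exact hm n hn
    · exact ⟨0, fun n _ q hqN hqQ hqbig => absurd ⟨q, hqN, hqQ, hqbig⟩ hD⟩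
  set f : ℕ → ℕ := fun i => (h_ex i).choose with hfdef
  have fsp : ∀ i n, f i ≤ n → ∀ q, N ≤ q → q ∉ Q → c/8 ≤ |S x i q| → |S x n q| < c/8 :=
    fun i => (h_ex i).choose_spec
  set f' : ℕ → ℕ := fun i => (Finset.range (i+1)).sup f with hf'def
  have hf' : ∀ j i, j ≤ i → f j ≤ f' i := fun j i h =>
    Finset.le_sup (Finset.mem_range.2 (by omega))
  -- the near coordinate set and uniform approximation threshold
  set K : Finset ℕ := if h : Q.Nonempty then insert h.choose (Finset.range N) else Finset.range N
    with hKdef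
  have hK : ∀ j, (j < N ∨ j ∈ Q) → j ∈ K := by
    intro j hj
    rcases hj with hj | hj
    · by_cases h : Q.Nonempty <;> simp [hKdef, h, Finset.mem_range, hj]
    · have hQne : Q.Nonempty := ⟨j, hj⟩
      have : j = hQne.choose := hQ hj hQne.choose_spec
      simp [hKdef, hQne, ← this]
  have hWev : ∀ᶠ n in atTop, ∀ j ∈ K, |S x n j - tl x j| ≤ c/4 := by
    rw [Filter.eventually_all_finset]
    intro j _
    have h1 : Tendsto (fun n => S x n j - tl x j) atTop (𝓝 0) := by
      simpa using (tendsto_S hc hx j).sub (tendsto_const_nhds (x := tl x j))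
    have h2 : ∀ᶠ n in atTop, |S x n j - tl x j| < c/4 := by
      have := h1.abs
      simp only [abs_zero] at this
      exact this.eventually_lt_const (by linarith)
    exact h2.mono fun n hn => hn.le
  obtain ⟨W, hW⟩ := eventually_atTop.1 hWev
  -- the selected times
  set σ : ℕ → ℕ := fun l => Nat.rec W (fun _ prev => max (prev + 1) (f' prev)) l with hσdef
  have hσs : ∀ l, σ (l+1) = max (σ l + 1) (f' (σ l)) := fun l => rfl
  have hσmono : StrictMono σ := strictMono_nat_of_lt_succ fun l => by
    rw [hσs]; exact lt_of_lt_of_le (Nat.lt_succ_self _) (le_max_left _ _)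
  have hσW : ∀ l, W ≤ σ l := fun l => hσmono.monotone (Nat.zero_le l)
  have key : ∀ l' l, l' < l → ∀ q, N ≤ q → q ∉ Q →
      c/8 ≤ |S x (σ l') q| → |S x (σ l) q| < c/8 := by
    intro l' l hll q hqN hqQ hqbig
    refine fsp (σ l') (σ l) ?_ q hqN hqQ hqbig
    calc f (σ l') ≤ f' (σ l') := hf' _ _ le_rfl
      _ ≤ max (σ l' + 1) (f' (σ l')) := le_max_right _ _
      _ = σ (l'+1) := (hσs l').symm
      _ ≤ σ l := hσmono.monotone hll
  set n : ℕ := σ (2*r) with hndef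
  set a : ℕ → ℝ := fun i =>
    (r:ℝ)⁻¹ * ∑ l ∈ Finset.range r, (if σ l ≤ i ∧ i < σ (r+l) then (1:ℝ) else 0) with hadef
  -- the sum identity
  have hsum : ∑ i ∈ Finset.range n, a i • x i
      = (r:ℝ)⁻¹ • ∑ l ∈ Finset.range r, (S x (σ (r+l)) - S x (σ l)) := by
    have step1 : ∀ i, a i • x i
        = (r:ℝ)⁻¹ • ((∑ l ∈ Finset.range r, (if σ l ≤ i ∧ i < σ (r+l) then (1:ℝ) else 0)) • x i) :=
      fun i => by rw [hadef]; rw [mul_smul]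
    calc ∑ i ∈ Finset.range n, a i • x i
        = (r:ℝ)⁻¹ • ∑ i ∈ Finset.range n,
            (∑ l ∈ Finset.range r, (if σ l ≤ i ∧ i < σ (r+l) then (1:ℝ) else 0)) • x i := by
          rw [Finset.smul_sum]; exact Finset.sum_congr rfl fun i _ => step1 i
      _ = (r:ℝ)⁻¹ • ∑ i ∈ Finset.range n, ∑ l ∈ Finset.range r,
            (if σ l ≤ i ∧ i < σ (r+l) then (1:ℝ) else 0) • x i := by
          congr 1; exact Finset.sum_congr rfl fun i _ => Finset.sum_smul (R := ℝ) (M := c0)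
      _ = (r:ℝ)⁻¹ • ∑ l ∈ Finset.range r, ∑ i ∈ Finset.range n,
            (if σ l ≤ i ∧ i < σ (r+l) then (1:ℝ) else 0) • x i := by rw [Finset.sum_comm]
      _ = (r:ℝ)⁻¹ • ∑ l ∈ Finset.range r, (S x (σ (r+l)) - S x (σ l)) := by
          congr 1
          refine Finset.sum_congr rfl fun l hl => ?_
          have hlr : l < r := Finset.mem_range.1 hl
          have hle : σ (r+l) ≤ n := hσmono.monotone (by omega)
          have e1 : ∀ i, (if σ l ≤ i ∧ i < σ (r+l) then (1:ℝ) else 0) • x i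
              = if σ l ≤ i ∧ i < σ (r+l) then x i else 0 := fun i => by
            split_ifs <;> simp
          calc ∑ i ∈ Finset.range n, (if σ l ≤ i ∧ i < σ (r+l) then (1:ℝ) else 0) • x i
              = ∑ i ∈ Finset.range n, (if σ l ≤ i ∧ i < σ (r+l) then x i else 0) :=
                Finset.sum_congr rfl fun i _ => e1 i
            _ = ∑ i ∈ (Finset.range n).filter (fun i => σ l ≤ i ∧ i < σ (r+l)), x i :=
                (Finset.sum_filter _ _).symm
            _ = ∑ i ∈ Finset.Ico (σ l) (σ (r+l)), x i := by
                congr 1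
                ext i
                simp only [Finset.mem_filter, Finset.mem_range, Finset.mem_Ico]
                omega
            _ = S x (σ (r+l)) - S x (σ l) :=
                Finset.sum_Ico_eq_sub _ (hσmono.monotone (by omega))
  -- lower bound
  have hlow : c ≤ ‖∑ i ∈ Finset.range n, a i • x i‖ := by
    have h1 := (hx n a).1
    have hA1 : a (σ (r-1)) = 1 := by
      show (r:ℝ)⁻¹ * ∑ l ∈ Finset.range r,
        (if σ l ≤ σ (r-1) ∧ σ (r-1) < σ (r+l) then (1:ℝ) else 0) = 1
      have : ∀ l ∈ Finset.range r, (if σ l ≤ σ (r-1) ∧ σ (r-1) < σ (r+l) then (1:ℝ) else 0) = 1 := by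
        intro l hl
        have hlr : l < r := Finset.mem_range.1 hl
        rw [if_pos ⟨hσmono.monotone (by omega), hσmono (by omega)⟩]
      rw [Finset.sum_congr rfl this]
      simp only [Finset.sum_const, Finset.card_range, nsmul_eq_mul, mul_one]
      field_simp
    have hidx : σ (r-1) < n := hσmono (by omega)
    have hsup : (1:ℝ) ≤ ⨆ i : Fin n, |a i.1| := by
      have hb : BddAbove (Set.range fun i : Fin n => |a i.1|) :=
        Set.Finite.bddAbove (Set.finite_range _)
      have := le_ciSup hb (⟨σ (r-1), hidx⟩ : Fin n)
      simpa [hA1] using this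
    calc c = c * 1 := (mul_one c).symm
      _ ≤ c * ⨆ i : Fin n, |a i.1| := mul_le_mul_of_nonneg_left hsup hc.le
      _ ≤ _ := h1
  -- upper bound on the average difference
  have hhigh : ‖(r:ℝ)⁻¹ • ∑ l ∈ Finset.range r, (S x (σ (r+l)) - S x (σ l))‖ ≤ c/2 := by
    refine c0_norm_le _ _ (by linarith) fun j => ?_
    have hv : ((r:ℝ)⁻¹ • ∑ l ∈ Finset.range r, (S x (σ (r+l)) - S x (σ l))) j
        = (r:ℝ)⁻¹ * ∑ l ∈ Finset.range r, (S x (σ (r+l)) j - S x (σ l) j) := by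
      rw [c0_smul_apply, c0_sum_apply]
      refine congrArg (fun t => (r:ℝ)⁻¹ * t) (Finset.sum_congr rfl fun l _ => ?_)
      simp [ZeroAtInftyContinuousMap.coe_sub]
    rw [hv, abs_mul, abs_inv, Nat.abs_cast]
    have habs : |∑ l ∈ Finset.range r, (S x (σ (r+l)) j - S x (σ l) j)|
        ≤ ∑ l ∈ Finset.range r, |S x (σ (r+l)) j - S x (σ l) j| :=
      Finset.abs_sum_le_sum_abs _ _
    by_cases hnear : j < N ∨ j ∈ Q
    · have hterm : ∀ l ∈ Finset.range r, |S x (σ (r+l)) j - S x (σ l) j| ≤ c/2 := by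
        intro l _
        have h1 := hW (σ (r+l)) (hσW _) j (hK j hnear)
        have h2 := hW (σ l) (hσW _) j (hK j hnear)
        calc |S x (σ (r+l)) j - S x (σ l) j|
            ≤ |S x (σ (r+l)) j - tl x j| + |tl x j - S x (σ l) j| := abs_sub_le _ _ _
          _ ≤ c/4 + c/4 := by rw [abs_sub_comm (tl x j)]; exact add_le_add h1 h2
          _ = c/2 := by ring
      have hS : ∑ l ∈ Finset.range r, |S x (σ (r+l)) j - S x (σ l) j| ≤ r * (c/2) := by
        calc ∑ l ∈ Finset.range r, |S x (σ (r+l)) j - S x (σ l) j|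
            ≤ ∑ _l ∈ Finset.range r, c/2 := Finset.sum_le_sum hterm
          _ = r * (c/2) := by simp [Finset.sum_const, Finset.card_range, mul_comm]
      calc (r:ℝ)⁻¹ * |∑ l ∈ Finset.range r, (S x (σ (r+l)) j - S x (σ l) j)|
          ≤ (r:ℝ)⁻¹ * (r * (c/2)) :=
            mul_le_mul_of_nonneg_left (le_trans habs hS) (by positivity)
        _ = c/2 := by field_simp
    · push_neg at hnear
      obtain ⟨hjN, hjQ⟩ := hnear
      have hCd : ∀ m, |S x m j| ≤ C := fun m => le_trans (c0_abs_le _ _) (factD hc hx m)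
      by_cases hbig : ∃ l0, l0 < 2*r ∧ c/8 ≤ |S x (σ l0) j|
      · obtain ⟨l0, hl0, hbig0⟩ := hbig
        have hsmall : ∀ l, l < 2*r → l ≠ l0 → |S x (σ l) j| < c/8 := by
          intro l hl hne
          by_contra h
          push_neg at h
          rcases lt_or_gt_of_ne hne with hlt | hgt
          · exact absurd (key l l0 hlt j hjN hjQ h) (not_lt.2 hbig0)
          · exact absurd (key l0 l hgt j hjN hjQ hbig0) (not_lt.2 h)
        set lt0 : ℕ := if l0 < r then l0 else l0 - r with hlt0def
        have hlt0 : lt0 < r := by rw [hlt0def]; split_ifs <;> omega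
        have hterm : ∀ l ∈ Finset.range r, |S x (σ (r+l)) j - S x (σ l) j|
            ≤ c/4 + (if l = lt0 then 2*C else 0) := by
          intro l hl
          have hlr : l < r := Finset.mem_range.1 hl
          by_cases hll : l = lt0
          · rw [if_pos hll]
            have := abs_sub (S x (σ (r+l)) j) (S x (σ l) j)
            calc |S x (σ (r+l)) j - S x (σ l) j| ≤ |S x (σ (r+l)) j| + |S x (σ l) j| :=
                abs_sub _ _
              _ ≤ C + C := add_le_add (hCd _) (hCd _)
              _ ≤ c/4 + 2*C := by linarith
          · rw [if_neg hll, add_zero]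
            have hne : l ≠ l0 ∧ r + l ≠ l0 := by
              by_cases hcase : l0 < r <;> rw [hlt0def] at hll <;> simp [hcase] at hll <;> omega
            have h1 := hsmall l (by omega) hne.1
            have h2 := hsmall (r+l) (by omega) hne.2
            calc |S x (σ (r+l)) j - S x (σ l) j| ≤ |S x (σ (r+l)) j| + |S x (σ l) j| :=
                abs_sub _ _
              _ ≤ c/4 := by linarith
        have hS : ∑ l ∈ Finset.range r, |S x (σ (r+l)) j - S x (σ l) j|
            ≤ r * (c/4) + 2*C := by
          calc ∑ l ∈ Finset.range r, |S x (σ (r+l)) j - S x (σ l) j|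
              ≤ ∑ l ∈ Finset.range r, (c/4 + (if l = lt0 then 2*C else 0)) :=
                Finset.sum_le_sum hterm
            _ = r * (c/4) + 2*C := by
                rw [Finset.sum_add_distrib]
                rw [Finset.sum_ite_eq' (Finset.range r) lt0 (fun _ => 2*C)]
                simp [Finset.mem_range.2 hlt0, Finset.sum_const, Finset.card_range, mul_comm]
        calc (r:ℝ)⁻¹ * |∑ l ∈ Finset.range r, (S x (σ (r+l)) j - S x (σ l) j)|
            ≤ (r:ℝ)⁻¹ * (r * (c/4) + 2*C) :=
              mul_le_mul_of_nonneg_left (le_trans habs hS) (by positivity)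
          _ = c/4 + 2*C/r := by field_simp
          _ ≤ c/4 + c/4 := by linarith
          _ = c/2 := by ring
      · push_neg at hbig
        have hterm : ∀ l ∈ Finset.range r, |S x (σ (r+l)) j - S x (σ l) j| ≤ c/4 := by
          intro l hl
          have hlr : l < r := Finset.mem_range.1 hl
          have h1 := hbig (r+l) (by omega)
          have h2 := hbig l (by omega)
          calc |S x (σ (r+l)) j - S x (σ l) j| ≤ |S x (σ (r+l)) j| + |S x (σ l) j| :=
              abs_sub _ _
            _ ≤ c/4 := by linarith
        have hS : ∑ l ∈ Finset.range r, |S x (σ (r+l)) j - S x (σ l) j| ≤ r * (c/4) := by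
          calc ∑ l ∈ Finset.range r, |S x (σ (r+l)) j - S x (σ l) j|
              ≤ ∑ _l ∈ Finset.range r, c/4 := Finset.sum_le_sum hterm
            _ = r * (c/4) := by simp [Finset.sum_const, Finset.card_range, mul_comm]
        calc (r:ℝ)⁻¹ * |∑ l ∈ Finset.range r, (S x (σ (r+l)) j - S x (σ l) j)|
            ≤ (r:ℝ)⁻¹ * (r * (c/4)) :=
              mul_le_mul_of_nonneg_left (le_trans habs hS) (by positivity)
          _ = c/4 := by field_simp
          _ ≤ c/2 := by linarith
  rw [hsum] at hlow
  linarith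

end MainLemma

lemma Apoly_vanish (n : ℕ) : (Apoly fun _ => e n) = 0 := by
  ext k
  show e n (pk k) * e n (qk k) = (0 : c0) k
  have hne : pk k ≠ qk k := (pk_lt_qk k).ne
  have h0 : (0 : c0) k = 0 := rfl
  rw [h0]
  by_cases h : pk k = n
  · have : qk k ≠ n := fun hq => hne (h.trans hq.symm)
    have he : e n (qk k) = 0 := by simp [e, this]
    rw [he, mul_zero]
  · have he : e n (pk k) = 0 := by simp [e, h]
    rw [he, zero_mul]

/-- There is a continuous 2-homogeneous polynomial `P : c₀ → c₀` vanishing on the unit vector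
basis such that, for every sequence equivalent to the `c₀`-basis, the sequence of values of `P`
at the partial sums is not relatively compact. -/
theorem exists_vanishing_on_basis_partial_sums_not_relcompact :
    ∃ A : ContinuousMultilinearMap ℝ (fun _ : Fin 2 => c0) c0,
      (∀ n : ℕ, (A fun _ => e n) = 0) ∧
      ∀ x : ℕ → c0, IsEquivC0Basis x →
        ¬ IsCompact (closure (Set.range fun n => A fun _ => ∑ i ∈ Finset.range n, x i)) := by
  classical
  refine ⟨Apoly, Apoly_vanish, ?_⟩
  rintro x ⟨c, C, hc, hcC, hx'⟩ hcompact
  have hx : ∀ (n : ℕ) (a : ℕ → ℝ),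
      c * (⨆ i : Fin n, |a i|) ≤ ‖∑ i ∈ Finset.range n, a i • x i‖ ∧
      ‖∑ i ∈ Finset.range n, a i • x i‖ ≤ C * (⨆ i : Fin n, |a i|) := hx'
  have hC : 0 < C := lt_of_lt_of_le hc hcC
  set δ : ℝ := c/16 with hδdef
  have hδ : 0 < δ := by rw [hδdef]; linarith
  set γ : ℝ := δ * δ with hγdef
  have hγ : 0 < γ := mul_pos hδ hδ
  set ε0 : ℝ := γ/(2*C) with hε0def
  have hε0 : 0 < ε0 := by positivity
  -- tail bounds for each partial sum
  have tail : ∀ m : ℕ, ∃ M : ℕ, ∀ j, M ≤ j → |S x m j| ≤ ε0 := by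
    intro m
    have h1 := (S x m).zero_at_infty'
    rw [Filter.cocompact_eq_cofinite, Nat.cofinite_eq_atTop] at h1
    have h2 : ∀ᶠ j in atTop, |S x m j| < ε0 := by
      have := h1.abs
      simp only [abs_zero] at this
      exact this.eventually_lt_const hε0
    obtain ⟨M, hM⟩ := eventually_atTop.1 h2
    exact ⟨M, fun j hj => (hM j hj).le⟩
  set τ : ℕ → ℕ := fun m => (tail m).choose with hτdef
  have τsp : ∀ m j, τ m ≤ j → |S x m j| ≤ ε0 := fun m => (tail m).choose_spec
  -- one step of the construction
  have step : ∀ B : ℕ, ∃ nk : ℕ × ℕ,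
      δ ≤ |S x nk.1 (pk nk.2)| ∧ δ ≤ |S x nk.1 (qk nk.2)| ∧
      B ≤ pk nk.2 ∧ B ≤ qk nk.2 := by
    intro B
    obtain ⟨n, p, q, hBp, hBq, hpq, hp, hq⟩ := mainlemma hc hx B
    obtain ⟨k, hk1, hk2⟩ := exists_pair (min p q) (max p q) (min_lt_max.2 hpq)
    refine ⟨(n, k), ?_, ?_, ?_, ?_⟩
    · rw [hk1]; rcases min_cases p q with ⟨h, _⟩ | ⟨h, _⟩ <;> rw [h] <;> assumption
    · rw [hk2]; rcases max_cases p q with ⟨h, _⟩ | ⟨h, _⟩ <;> rw [h] <;> assumption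
    · rw [hk1]; exact le_min hBp hBq
    · rw [hk2]; exact le_trans hBp (le_max_left _ _)
  set stepf : ℕ → ℕ × ℕ := fun B => (step B).choose with hstepfdef
  have stepsp : ∀ B, δ ≤ |S x (stepf B).1 (pk (stepf B).2)| ∧
      δ ≤ |S x (stepf B).1 (qk (stepf B).2)| ∧
      B ≤ pk (stepf B).2 ∧ B ≤ qk (stepf B).2 := fun B => (step B).choose_spec
  -- the recursively selected times, pair-indices, and bounds
  set st : ℕ → ℕ × ℕ × ℕ := fun j => Nat.rec
      ((stepf 0).1, (stepf 0).2, τ (stepf 0).1)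
      (fun _ prev => ((stepf prev.2.2).1, (stepf prev.2.2).2,
        max prev.2.2 (τ (stepf prev.2.2).1))) j with hstdef
  set nj : ℕ → ℕ := fun j => (st j).1 with hnjdef
  set kj : ℕ → ℕ := fun j => (st j).2.1 with hkjdef
  set Bj : ℕ → ℕ := fun j => (st j).2.2 with hBjdef
  have hst0 : st 0 = ((stepf 0).1, (stepf 0).2, τ (stepf 0).1) := rfl
  have hsts : ∀ j, st (j+1) = ((stepf (Bj j)).1, (stepf (Bj j)).2,
      max (Bj j) (τ (stepf (Bj j)).1)) := fun j => rfl
  have hBmono : Monotone Bj := monotone_nat_of_le_succ fun j => by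
    show Bj j ≤ (st (j+1)).2.2
    rw [hsts j]
    exact le_max_left _ _
  have hτB : ∀ j, τ (nj j) ≤ Bj j := by
    intro j
    cases j with
    | zero => exact le_rfl
    | succ j =>
        show τ (st (j+1)).1 ≤ (st (j+1)).2.2
        rw [hsts j]
        exact le_max_right _ _
  have hkj : ∀ j, δ ≤ |S x (nj j) (pk (kj j))| ∧ δ ≤ |S x (nj j) (qk (kj j))| := by
    intro j
    cases j with
    | zero => exact ⟨(stepsp 0).1, (stepsp 0).2.1⟩
    | succ j =>
        have h := stepsp (Bj j)
        have h1 : nj (j+1) = (stepf (Bj j)).1 := by show (st (j+1)).1 = _; rw [hsts j]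
        have h2 : kj (j+1) = (stepf (Bj j)).2 := by show (st (j+1)).2.1 = _; rw [hsts j]
        rw [h1, h2]
        exact ⟨h.1, h.2.1⟩
  have hpkB : ∀ j, Bj j ≤ pk (kj (j+1)) ∧ Bj j ≤ qk (kj (j+1)) := by
    intro j
    have h := stepsp (Bj j)
    have h2 : kj (j+1) = (stepf (Bj j)).2 := by show (st (j+1)).2.1 = _; rw [hsts j]
    rw [h2]
    exact ⟨h.2.2.1, h.2.2.2⟩
  -- the values
  set F : ℕ → c0 := fun n => Apoly fun _ => S x n with hFdef
  have hFapp : ∀ n k, F n k = S x n (pk k) * S x n (qk k) := fun n k => rfl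
  have hCd : ∀ m j, |S x m j| ≤ C := fun m j => le_trans (c0_abs_le _ _) (factD hc hx m)
  -- separation
  have hsep : ∀ l j, l < j → γ/2 ≤ ‖F (nj j) - F (nj l)‖ := by
    intro l j hlj
    obtain ⟨j', rfl⟩ : ∃ j', j = j' + 1 := ⟨j - 1, by omega⟩
    set k := kj (j'+1) with hkdef
    have hbig : γ ≤ |F (nj (j'+1)) k| := by
      rw [hFapp, abs_mul, hγdef]
      have h1 := (hkj (j'+1)).1
      have h2 := (hkj (j'+1)).2
      rw [← hkdef] at h1 h2
      exact mul_le_mul h1 h2 hδ.le (abs_nonneg _)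
    have htail : τ (nj l) ≤ pk k := by
      calc τ (nj l) ≤ Bj l := hτB l
        _ ≤ Bj j' := hBmono (by omega)
        _ ≤ pk k := (hpkB j').1
    have hsmall : |F (nj l) k| ≤ γ/2 := by
      rw [hFapp, abs_mul]
      calc |S x (nj l) (pk k)| * |S x (nj l) (qk k)| ≤ ε0 * C := by
            exact mul_le_mul (τsp _ _ htail) (hCd _ _) (abs_nonneg _) hε0.le
        _ = γ/2 := by rw [hε0def]; field_simp
    have hcoord : γ/2 ≤ |(F (nj (j'+1)) - F (nj l)) k| := by
      have : (F (nj (j'+1)) - F (nj l)) k = F (nj (j'+1)) k - F (nj l) k := by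
        simp [ZeroAtInftyContinuousMap.coe_sub]
      rw [this]
      have := abs_sub_abs_le_abs_sub (F (nj (j'+1)) k) (F (nj l) k)
      linarith [abs_le.1 hsmall, le_abs_self (F (nj (j'+1)) k - F (nj l) k),
        neg_abs_le (F (nj (j'+1)) k - F (nj l) k)]
    exact le_trans hcoord (c0_abs_le _ _)
  -- contradiction with total boundedness
  have htb : TotallyBounded (closure (Set.range F)) := hcompact.totallyBounded
  rw [Metric.totallyBounded_iff] at htb
  obtain ⟨t, htfin, htsub⟩ := htb (γ/4) (by positivity)
  have hmem : ∀ j : ℕ, F (nj j) ∈ closure (Set.range F) :=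
    fun j => subset_closure (Set.mem_range_self _)
  have hch : ∀ j : ℕ, ∃ z : c0, z ∈ t ∧ dist (F (nj j)) z < γ/4 := by
    intro j
    have := htsub (hmem j)
    rw [Set.mem_iUnion₂] at this
    obtain ⟨z, hz, hball⟩ := this
    exact ⟨z, hz, Metric.mem_ball.1 hball⟩
  choose z hz hdist using hch
  haveI : Finite t := htfin.to_subtype
  obtain ⟨j, l, hjl, heq⟩ :=
    Finite.exists_ne_map_eq_of_infinite (fun j => (⟨z j, hz j⟩ : t))
  have hzeq : z j = z l := congrArg Subtype.val heq
  have hd : dist (F (nj j)) (F (nj l)) < γ/2 := by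
    calc dist (F (nj j)) (F (nj l)) ≤ dist (F (nj j)) (z j) + dist (z j) (F (nj l)) :=
        dist_triangle _ _ _
      _ = dist (F (nj j)) (z j) + dist (F (nj l)) (z l) := by
          rw [hzeq, dist_comm (z l) (F (nj l))]
      _ < γ/4 + γ/4 := add_lt_add (hdist j) (hdist l)
      _ = γ/2 := by ring
  rcases hjl.lt_or_gt with h | h
  · have := hsep j l h
    rw [dist_eq_norm] at hd
    rw [norm_sub_rev] at this
    linarith
  · have := hsep l j h
    rw [dist_eq_norm] at hd
    linarith
end
end

section
/- Let X and Y be real Banach spaces, k ≥ 1 an integer, P : X → Y a continuous k-homogeneous polynomial, and ∑ xₙ a weakly unconditionally Cauchy series in X. Then the sequence (P(∑_{i=1}^n x_i))ₙ is weakly Cauchy in Y: for every continuous linear functional ψ ∈ Y*, the scalar sequence (ψ(P(∑_{i=1}^n x_i)))ₙ converges. -/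
open Filter Topology Metric

noncomputable section

section WUCAux

/-- Schur-type gliding hump lemma: if each row is absolutely summable, entries tend to zero
columnwise, and all pairings against bounded sequences converge, then the ℓ¹ norms tend to 0. -/
lemma schur_zero (f : ℕ → ℕ → ℝ) (hsf : ∀ l, Summable fun j => |f l j|)
    (hcoord : ∀ j, Tendsto (fun l => f l j) atTop (𝓝 0))
    (hweak : ∀ b : ℕ → ℝ, (∀ j, |b j| ≤ 1) →
      ∃ L, Tendsto (fun l => ∑' j, b j * f l j) atTop (𝓝 L)) :
    Tendsto (fun l => ∑' j, |f l j|) atTop (𝓝 0) := by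
  by_contra hcon
  rw [Metric.tendsto_atTop] at hcon
  push_neg at hcon
  obtain ⟨ε, hε, hbig⟩ := hcon
  have hbig' : ∀ N, ∃ l, N ≤ l ∧ ε ≤ ∑' j, |f l j| := by
    intro N
    obtain ⟨l, hl, h⟩ := hbig N
    refine ⟨l, hl, ?_⟩
    rw [Real.dist_eq, sub_zero, abs_of_nonneg (tsum_nonneg (fun j => abs_nonneg _))] at h
    exact h
  have h8 : (0:ℝ) < ε / 8 := by linarith
  -- the combined pick of (l, next hump bound)
  have hpick : ∀ (a K : ℕ), ∃ p : ℕ × ℕ,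
      a ≤ p.1 ∧ (∑ j ∈ Finset.range K, |f p.1 j| < ε / 8) ∧ (ε ≤ ∑' j, |f p.1 j|)
      ∧ K < p.2 ∧ ∑' j, |f p.1 (j + p.2)| < ε / 8 := by
    intro a K
    have hhead : Tendsto (fun l => ∑ j ∈ Finset.range K, |f l j|) atTop (𝓝 0) := by
      have : Tendsto (fun l => ∑ j ∈ Finset.range K, |f l j|) atTop
          (𝓝 (∑ j ∈ Finset.range K, |(0:ℝ)|)) :=
        tendsto_finset_sum _ (fun j _ => (hcoord j).abs)
      simpa using this
    obtain ⟨N1, hN1⟩ := (Metric.tendsto_atTop.1 hhead) (ε/8) h8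
    obtain ⟨l, hl, hltot⟩ := hbig' (max a N1)
    have hheadl : ∑ j ∈ Finset.range K, |f l j| < ε / 8 := by
      have := hN1 l (le_trans (le_max_right _ _) hl)
      rwa [Real.dist_eq, sub_zero,
        abs_of_nonneg (Finset.sum_nonneg (fun j _ => abs_nonneg _))] at this
    have htail : Tendsto (fun m => ∑' j, |f l (j + m)|) atTop (𝓝 0) :=
      tendsto_sum_nat_add (fun j => |f l j|)
    obtain ⟨M1, hM1⟩ := (Metric.tendsto_atTop.1 htail) (ε/8) h8
    refine ⟨(l, max M1 (K+1)), le_trans (le_max_left _ _) hl, hheadl, hltot,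
      lt_of_lt_of_le (Nat.lt_succ_self K) (le_max_right _ _), ?_⟩
    have := hM1 (max M1 (K+1)) (le_max_left _ _)
    rwa [Real.dist_eq, sub_zero, abs_of_nonneg (tsum_nonneg (fun j => abs_nonneg _))] at this
  choose pick hp1 hp2 hp3 hp4 hp5 using hpick
  -- recursive construction of hump boundaries
  set h : ℕ → ℕ := fun a => Nat.rec 0 (fun a' prev => (pick a' prev).2) a with hh
  have hsucc : ∀ a, h (a+1) = (pick a (h a)).2 := fun a => rfl
  set l : ℕ → ℕ := fun a => (pick a (h a)).1 with hldef
  have hmono : StrictMono h := by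
    refine strictMono_nat_of_lt_succ (fun a => ?_)
    rw [hsucc a]; exact hp4 a (h a)
  have hla : ∀ a, a ≤ l a := fun a => hp1 a (h a)
  have hltend : Tendsto l atTop atTop := tendsto_atTop_mono hla tendsto_id
  -- index function and signs
  set aix : ℕ → ℕ := fun j => Nat.findGreatest (fun a => h a ≤ j) j with haix
  have haix_spec : ∀ a j, h a ≤ j → j < h (a+1) → aix j = a := by
    intro a j h1 h2
    have haj : a ≤ j := le_trans hmono.le_apply h1
    have hle : a ≤ aix j := Nat.le_findGreatest haj h1
    have hspec : h (aix j) ≤ j := Nat.findGreatest_spec (P := fun a' => h a' ≤ j) (m := a) (n := j) haj h1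
    rcases lt_or_eq_of_le hle with hlt | heq
    · exfalso
      have : h (a+1) ≤ h (aix j) := hmono.monotone hlt
      omega
    · omega
  set A : ℕ → ℝ := fun a => if a % 2 = 0 then 1 else -1 with hA
  have hAsq : ∀ a, A a * A a = 1 := by
    intro a; by_cases hpar : a % 2 = 0 <;> simp [hA, hpar]
  have hAabs : ∀ a, |A a| = 1 := by
    intro a; by_cases hpar : a % 2 = 0 <;> simp [hA, hpar]
  set sg : ℝ → ℝ := fun t => if 0 ≤ t then 1 else -1 with hsg
  have hsgmul : ∀ t, sg t * t = |t| := by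
    intro t
    by_cases hpos : 0 ≤ t
    · simp [hsg, hpos, abs_of_nonneg hpos]
    · simp [hsg, hpos, abs_of_neg (lt_of_not_ge hpos)]
  have hsgabs : ∀ t, |sg t| = 1 := by
    intro t; by_cases hpos : 0 ≤ t <;> simp [hsg, hpos]
  set b : ℕ → ℝ := fun j => A (aix j) * sg (f (l (aix j)) j) with hb
  have hb1 : ∀ j, |b j| ≤ 1 := by
    intro j; rw [hb]
    simp only [abs_mul, hAabs, hsgabs, one_mul]
    exact le_refl 1
  -- main estimate
  have hmain : ∀ a, ε / 2 ≤ A a * ∑' j, b j * f (l a) j := by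
    intro a
    set g0 : ℕ → ℝ := fun j => f (l a) j with hg0
    set K : ℕ := h a with hK
    set K' : ℕ := h (a+1) with hK'
    have hKK' : K ≤ K' := (hmono (Nat.lt_succ_self a)).le
    have hsg0 : Summable fun j => |g0 j| := hsf (l a)
    have habs_le : ∀ j, |b j * g0 j| ≤ |g0 j| := by
      intro j
      rw [abs_mul]
      exact mul_le_of_le_one_left (abs_nonneg _) (hb1 j)
    have hsabs : Summable fun j => |b j * g0 j| :=
      Summable.of_nonneg_of_le (fun j => abs_nonneg _) habs_le hsg0
    have hsbg : Summable fun j => b j * g0 j := Summable.of_abs hsabs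
    have hheadl : ∑ j ∈ Finset.range K, |g0 j| < ε / 8 := hp2 a (h a)
    have htaill : ∑' j, |g0 (j + K')| < ε / 8 := by
      have := hp5 a (h a)
      rwa [← hsucc a] at this
    have htot : ε ≤ ∑' j, |g0 j| := hp3 a (h a)
    -- splittings
    have split1 : (∑ j ∈ Finset.range K', b j * g0 j) + ∑' j, b (j + K') * g0 (j + K')
        = ∑' j, b j * g0 j := hsbg.sum_add_tsum_nat_add K'
    have split2 : (∑ j ∈ Finset.range K', |g0 j|) + ∑' j, |g0 (j + K')|
        = ∑' j, |g0 j| := hsg0.sum_add_tsum_nat_add K'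
    have front : (∑ j ∈ Finset.range K, b j * g0 j) + ∑ j ∈ Finset.Ico K K', b j * g0 j
        = ∑ j ∈ Finset.range K', b j * g0 j := Finset.sum_range_add_sum_Ico _ hKK'
    have front2 : (∑ j ∈ Finset.range K, |g0 j|) + ∑ j ∈ Finset.Ico K K', |g0 j|
        = ∑ j ∈ Finset.range K', |g0 j| := Finset.sum_range_add_sum_Ico _ hKK'
    set T1 : ℝ := ∑ j ∈ Finset.range K, b j * g0 j with hT1
    set T2 : ℝ := ∑ j ∈ Finset.Ico K K', b j * g0 j with hT2
    set T3 : ℝ := ∑' j, b (j + K') * g0 (j + K') with hT3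
    have hT1abs : |T1| ≤ ∑ j ∈ Finset.range K, |g0 j| :=
      le_trans (Finset.abs_sum_le_sum_abs _ _) (Finset.sum_le_sum (fun j _ => habs_le j))
    have hT3abs : |T3| ≤ ∑' j, |g0 (j + K')| := by
      have hs1 : Summable fun j => |b (j + K') * g0 (j + K')| :=
        (summable_nat_add_iff (f := fun j => |b j * g0 j|) K').2 hsabs
      have hs2 : Summable fun j => |g0 (j + K')| := (summable_nat_add_iff (f := fun j => |g0 j|) K').2 hsg0
      calc |T3| ≤ ∑' j, |b (j + K') * g0 (j + K')| :=
            norm_tsum_le_tsum_norm (f := fun j => b (j+K') * g0 (j+K')) hs1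
        _ ≤ ∑' j, |g0 (j + K')| := hs1.tsum_le_tsum (fun j => habs_le _) hs2
    have hT2eq : A a * T2 = ∑ j ∈ Finset.Ico K K', |g0 j| := by
      rw [hT2, Finset.mul_sum]
      refine Finset.sum_congr rfl (fun j hj => ?_)
      obtain ⟨hj1, hj2⟩ := Finset.mem_Ico.1 hj
      have haj : aix j = a := haix_spec a j hj1 hj2
      rw [hb]
      simp only [haj]
      have : A a * (A a * sg (f (l a) j) * f (l a) j)
          = (A a * A a) * (sg (f (l a) j) * f (l a) j) := by ring
      rw [hg0, this, hAsq, hsgmul, one_mul]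
    have hA1 : A a * T1 ≥ -(∑ j ∈ Finset.range K, |g0 j|) := by
      have h1 : |A a * T1| = |T1| := by rw [abs_mul, hAabs, one_mul]
      have h2 : -(|A a * T1|) ≤ A a * T1 := neg_abs_le _
      rw [h1] at h2
      linarith [hT1abs]
    have hA3 : A a * T3 ≥ -(∑' j, |g0 (j + K')|) := by
      have h1 : |A a * T3| = |T3| := by rw [abs_mul, hAabs, one_mul]
      have h2 : -(|A a * T3|) ≤ A a * T3 := neg_abs_le _
      rw [h1] at h2
      linarith [hT3abs]
    have hSeq : A a * (∑' j, b j * g0 j) = A a * T1 + A a * T2 + A a * T3 := by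
      rw [← split1, ← front]; ring
    have hhead0 : 0 ≤ ∑ j ∈ Finset.range K, |g0 j| := Finset.sum_nonneg (fun j _ => abs_nonneg _)
    have htail0 : 0 ≤ ∑' j, |g0 (j + K')| := tsum_nonneg (fun j => abs_nonneg _)
    have : ∑' j, b j * f (l a) j = ∑' j, b j * g0 j := rfl
    rw [this, hSeq, hT2eq]
    linarith
  -- contradiction
  obtain ⟨L0, hL0⟩ := hweak b hb1
  have hcomp : Tendsto (fun a => ∑' j, b j * f (l a) j) atTop (𝓝 L0) := hL0.comp hltend
  have h2t : Tendsto (fun a : ℕ => 2 * a) atTop atTop :=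
    tendsto_atTop_mono (fun a => by simp only [id_eq]; omega) tendsto_id
  have h2t' : Tendsto (fun a : ℕ => 2 * a + 1) atTop atTop :=
    tendsto_atTop_mono (fun a => by simp only [id_eq]; omega) tendsto_id
  have heven : Tendsto (fun a => ∑' j, b j * f (l (2 * a)) j) atTop (𝓝 L0) := hcomp.comp h2t
  have hodd : Tendsto (fun a => ∑' j, b j * f (l (2 * a + 1)) j) atTop (𝓝 L0) := hcomp.comp h2t'
  have hLlow : ε / 2 ≤ L0 := by
    refine ge_of_tendsto heven (Eventually.of_forall (fun a => ?_))
    have := hmain (2 * a)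
    have hA2 : A (2 * a) = 1 := by simp [hA, Nat.mul_mod_right]
    rwa [hA2, one_mul] at this
  have hLhigh : L0 ≤ -(ε / 2) := by
    refine le_of_tendsto hodd (Eventually.of_forall (fun a => ?_))
    have := hmain (2 * a + 1)
    have hA2 : A (2 * a + 1) = -1 := by
      have : (2 * a + 1) % 2 = 1 := by omega
      simp [hA, this]
    rw [hA2] at this
    linarith
  linarith



variable {X : Type*} [NormedAddCommGroup X] [NormedSpace ℝ X]

/-- quantitative w.u.C. bound via Banach–Steinhaus -/
lemma wuc_bound (x : ℕ → X) (hx : ∀ φ : X →L[ℝ] ℝ, Summable fun n => |φ (x n)|) :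
    ∃ C : ℝ, 0 ≤ C ∧ (∀ φ : X →L[ℝ] ℝ, ∑' j, |φ (x j)| ≤ C * ‖φ‖) ∧
      ∀ n, ‖∑ i ∈ Finset.range n, x i‖ ≤ C := by
  set g : ℕ × (ℕ → Bool) → StrongDual ℝ X →L[ℝ] ℝ := fun p =>
    NormedSpace.inclusionInDoubleDual ℝ X
      (∑ i ∈ Finset.range p.1, (if p.2 i then x i else -x i)) with hg
  have hpt : ∀ φ : StrongDual ℝ X, ∃ Cφ, ∀ p, ‖g p φ‖ ≤ Cφ := by
    intro φ
    refine ⟨∑' j, |φ (x j)|, ?_⟩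
    rintro ⟨n, σ⟩
    have h1 : g (n, σ) φ = ∑ i ∈ Finset.range n, φ (if σ i then x i else -x i) := by
      rw [hg]
      rw [NormedSpace.dual_def]
      exact map_sum φ _ _
    rw [Real.norm_eq_abs, h1]
    refine le_trans (Finset.abs_sum_le_sum_abs _ _) ?_
    refine le_trans (Finset.sum_le_sum (fun i _ => ?_))
      ((hx φ).sum_le_tsum _ (fun i _ => abs_nonneg _))
    by_cases h : σ i <;> simp [h]
  obtain ⟨C', hC'⟩ := banach_steinhaus hpt
  set C := max C' 0 with hCdef
  have hbound : ∀ φ : X →L[ℝ] ℝ, ∑' j, |φ (x j)| ≤ C * ‖φ‖ := by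
    intro φ
    have key : ∀ n, ∑ j ∈ Finset.range n, |φ (x j)| ≤ C * ‖φ‖ := by
      intro n
      set σ : ℕ → Bool := fun j => decide (0 ≤ φ (x j)) with hσ
      have h1 : g (n, σ) φ = ∑ j ∈ Finset.range n, |φ (x j)| := by
        rw [hg]
        rw [NormedSpace.dual_def]
        rw [map_sum]
        refine Finset.sum_congr rfl (fun j _ => ?_)
        by_cases h : 0 ≤ φ (x j)
        · simp [hσ, h, abs_of_nonneg h]
        · simp [hσ, h, abs_of_neg (lt_of_not_ge h), map_neg]
      calc ∑ j ∈ Finset.range n, |φ (x j)| = g (n, σ) φ := h1.symm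
        _ ≤ ‖g (n, σ) φ‖ := le_abs_self _
        _ ≤ ‖g (n, σ)‖ * ‖φ‖ := ContinuousLinearMap.le_opNorm _ _
        _ ≤ C * ‖φ‖ :=
            mul_le_mul_of_nonneg_right (le_trans (hC' _) (le_max_left _ _)) (norm_nonneg _)
    exact le_of_tendsto ((hx φ).hasSum.tendsto_sum_nat) (Eventually.of_forall key)
  refine ⟨C, le_max_right _ _, hbound, fun n => ?_⟩
  refine NormedSpace.norm_le_dual_bound ℝ _ (le_max_right _ _) (fun f => ?_)
  have h2 : f (∑ i ∈ Finset.range n, x i) = ∑ i ∈ Finset.range n, f (x i) := map_sum f _ _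
  rw [Real.norm_eq_abs, h2]
  refine le_trans (Finset.abs_sum_le_sum_abs _ _) ?_
  exact le_trans ((hx f).sum_le_tsum _ (fun i _ => abs_nonneg _)) (hbound f)


private lemma key_induction (x : ℕ → X) (hx : ∀ φ : X →L[ℝ] ℝ, Summable fun n => |φ (x n)|)
    (C : ℝ) (hC0 : 0 ≤ C)
    (hC : ∀ φ : X →L[ℝ] ℝ, ∑' j, |φ (x j)| ≤ C * ‖φ‖)
    (hCs : ∀ n, ‖∑ i ∈ Finset.range n, x i‖ ≤ C) :
    ∀ (k : ℕ) (B : ContinuousMultilinearMap ℝ (fun _ : Fin k => X) ℝ),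
      ∃ L, Tendsto (fun n => B (fun _ => ∑ i ∈ Finset.range n, x i)) atTop (𝓝 L) := by
  intro k
  induction k with
  | zero =>
    intro B
    refine ⟨B (fun i => Fin.elim0 i), ?_⟩
    have heq : ∀ n, (fun _ : Fin 0 => ∑ i ∈ Finset.range n, x i) = (fun i => Fin.elim0 i) := by
      intro n; funext i; exact Fin.elim0 i
    simp only [heq]
    exact tendsto_const_nhds
  | succ k IH =>
    intro B
    set s : ℕ → X := fun n => ∑ i ∈ Finset.range n, x i with hsdef
    set ψ : ℕ → X →L[ℝ] ℝ := fun n => B.curryRight (fun _ => s n) with hψ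
    set w : ℕ → ℕ → ℝ := fun n j => ψ n (x j) with hw
    -- coordinatewise limits
    have hcoordlim : ∀ j, ∃ L, Tendsto (fun n => w n j) atTop (𝓝 L) := by
      intro j
      obtain ⟨L, hL⟩ := IH (((ContinuousLinearMap.apply ℝ ℝ (x j)).compContinuousMultilinearMap
        B.curryRight))
      exact ⟨L, hL⟩
    choose wlim hwlim using hcoordlim
    -- row summability and bounds
    have hrow : ∀ n, Summable fun j => |w n j| := fun n => hx (ψ n)
    set C2 : ℝ := C * (‖B.curryRight‖ * C ^ k) with hC2
    have hψnorm : ∀ n, ‖ψ n‖ ≤ ‖B.curryRight‖ * C ^ k := by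
      intro n
      refine le_trans (ContinuousMultilinearMap.le_opNorm _ _) ?_
      refine mul_le_mul_of_nonneg_left ?_ (norm_nonneg _)
      calc (∏ _i : Fin k, ‖s n‖) = ‖s n‖ ^ k := by
            rw [Finset.prod_const, Finset.card_univ, Fintype.card_fin]
        _ ≤ C ^ k := pow_le_pow_left₀ (norm_nonneg _) (hCs n) k
    have hrowbound : ∀ n, ∑' j, |w n j| ≤ C2 := by
      intro n
      refine le_trans (hC (ψ n)) ?_
      rw [hC2]
      exact mul_le_mul_of_nonneg_left (hψnorm n) hC0
    -- limit row is summable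
    have hwlimsum : Summable fun j => |wlim j| := by
      refine summable_of_sum_range_le (fun j => abs_nonneg _) (fun n0 => ?_) (c := C2)
      have htend : Tendsto (fun n => ∑ j ∈ Finset.range n0, |w n j|) atTop
          (𝓝 (∑ j ∈ Finset.range n0, |wlim j|)) :=
        tendsto_finset_sum _ (fun j _ => (hwlim j).abs)
      refine le_of_tendsto htend (Eventually.of_forall (fun n => ?_))
      exact le_trans ((hrow n).sum_le_tsum _ (fun j _ => abs_nonneg _)) (hrowbound n)
    -- weak limits
    have hweaklim : ∀ b : ℕ → ℝ, (∀ j, |b j| ≤ 1) →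
        ∃ L, Tendsto (fun n => ∑' j, b j * w n j) atTop (𝓝 L) := by
      intro b hb
      have hsummb : ∀ φ : X →L[ℝ] ℝ, Summable fun j => b j * φ (x j) := by
        intro φ
        refine Summable.of_abs (Summable.of_nonneg_of_le (fun j => abs_nonneg _)
          (fun j => ?_) (hx φ))
        rw [abs_mul]
        exact mul_le_of_le_one_left (abs_nonneg _) (hb j)
      set lin : (X →L[ℝ] ℝ) →ₗ[ℝ] ℝ :=
        { toFun := fun φ => ∑' j, b j * φ (x j)
          map_add' := by
            intro φ χ
            simp only [ContinuousLinearMap.add_apply, mul_add]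
            exact (hsummb φ).tsum_add (hsummb χ)
          map_smul' := by
            intro c φ
            simp only [ContinuousLinearMap.coe_smul', Pi.smul_apply, smul_eq_mul,
              RingHom.id_apply]
            rw [← tsum_mul_left]
            congr 1
            funext j
            ring } with hlin
      have hlinbound : ∀ φ : X →L[ℝ] ℝ, ‖lin φ‖ ≤ C * ‖φ‖ := by
        intro φ
        have h1 : ‖lin φ‖ ≤ ∑' j, |b j * φ (x j)| := by
          have := norm_tsum_le_tsum_norm (f := fun j => b j * φ (x j))
            ((hsummb φ).abs)
          exact this
        refine le_trans h1 (le_trans ?_ (hC φ))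
        refine ((hsummb φ).abs).tsum_le_tsum (fun j => ?_) (hx φ)
        rw [abs_mul]
        exact mul_le_of_le_one_left (abs_nonneg _) (hb j)
      set Eb : (X →L[ℝ] ℝ) →L[ℝ] ℝ := LinearMap.mkContinuous lin C hlinbound with hEb
      obtain ⟨L, hL⟩ := IH (Eb.compContinuousMultilinearMap B.curryRight)
      refine ⟨L, ?_⟩
      have : ∀ n, (Eb.compContinuousMultilinearMap B.curryRight) (fun _ => s n)
          = ∑' j, b j * w n j := fun n => rfl
      exact hL.congr this
    -- Schur
    have hschur : Tendsto (fun n => ∑' j, |w n j - wlim j|) atTop (𝓝 0) := by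
      refine schur_zero (fun n j => w n j - wlim j) (fun n => ?_) (fun j => ?_) (fun b hb => ?_)
      · exact ((hrow n).of_abs.sub hwlimsum.of_abs).abs
      · simpa using (hwlim j).sub (tendsto_const_nhds (α := ℕ) (x := wlim j))
      · obtain ⟨L, hL⟩ := hweaklim b hb
        have hsum1 : ∀ n, Summable fun j => b j * w n j := by
          intro n
          refine Summable.of_abs (Summable.of_nonneg_of_le (fun j => abs_nonneg _)
            (fun j => ?_) (hrow n))
          rw [abs_mul]; exact mul_le_of_le_one_left (abs_nonneg _) (hb j)
        have hsum2 : Summable fun j => b j * wlim j := by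
          refine Summable.of_abs (Summable.of_nonneg_of_le (fun j => abs_nonneg _)
            (fun j => ?_) hwlimsum)
          rw [abs_mul]; exact mul_le_of_le_one_left (abs_nonneg _) (hb j)
        refine ⟨L - ∑' j, b j * wlim j, ?_⟩
        have heq : ∀ n, ∑' j, b j * (w n j - wlim j)
            = (∑' j, b j * w n j) - ∑' j, b j * wlim j := by
          intro n
          rw [← (hsum1 n).tsum_sub hsum2]
          congr 1; funext j; ring
        simp only [heq]
        exact hL.sub tendsto_const_nhds
    -- assembly
    refine ⟨∑' j, wlim j, ?_⟩
    have hkey : ∀ n, B (fun _ => s n) = ∑ j ∈ Finset.range n, w n j := by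
      intro n
      have h1 : (fun _ : Fin (k+1) => s n) = Fin.snoc (fun _ : Fin k => s n) (s n) := by
        funext i
        simp only [Fin.snoc]
        split <;> rfl
      rw [h1, ← ContinuousMultilinearMap.curryRight_apply]
      exact map_sum (ψ n) _ _
    have hterm1 : Tendsto (fun n => ∑ j ∈ Finset.range n, (w n j - wlim j)) atTop (𝓝 0) := by
      refine squeeze_zero_norm (fun n => ?_) hschur
      rw [Real.norm_eq_abs]
      refine le_trans (Finset.abs_sum_le_sum_abs _ _) ?_
      exact (((hrow n).of_abs.sub hwlimsum.of_abs).abs).sum_le_tsum _ (fun j _ => abs_nonneg _)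
    have hterm2 : Tendsto (fun n => ∑ j ∈ Finset.range n, wlim j) atTop (𝓝 (∑' j, wlim j)) :=
      (hwlimsum.of_abs.hasSum).tendsto_sum_nat
    have hfinal : Tendsto (fun n => (∑ j ∈ Finset.range n, (w n j - wlim j))
        + ∑ j ∈ Finset.range n, wlim j) atTop (𝓝 (0 + ∑' j, wlim j)) :=
      hterm1.add hterm2
    rw [zero_add] at hfinal
    refine hfinal.congr (fun n => ?_)
    rw [hkey n, ← Finset.sum_add_distrib]
    congr 1; funext j; ring


end WUCAux

/-- For every w.u.C. series `∑ xₙ`, the sequence `(P (∑_{i<n} xᵢ))ₙ` is weakly Cauchy. -/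
theorem partial_sums_weakly_cauchy {X Y : Type*}
    [NormedAddCommGroup X] [NormedSpace ℝ X] [CompleteSpace X]
    [NormedAddCommGroup Y] [NormedSpace ℝ Y] [CompleteSpace Y]
    (k : ℕ) (hk : 1 ≤ k) (A : ContinuousMultilinearMap ℝ (fun _ : Fin k => X) Y)
    (x : ℕ → X) (hx : WUC x) :
    ∀ ψ : Y →L[ℝ] ℝ, ∃ L : ℝ,
      Tendsto (fun n => ψ (A fun _ => ∑ i ∈ Finset.range n, x i)) atTop (𝓝 L) := by
  intro ψ
  obtain ⟨C, hC0, hC, hCs⟩ := wuc_bound x hx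
  exact key_induction x hx C hC0 hC hCs k (ψ.compContinuousMultilinearMap A)
end
end

section
/- Let k ≥ 1 be an integer and let (eₙ) be the unit vector basis of c₀. For every n and all scalars a₁,…,aₙ, the projective seminorm of ∑_{i=1}^n aᵢ · eᵢ^{⊗k} in the k-fold algebraic tensor product ⊗^k c₀ equals max_{1≤i≤n} |aᵢ| = ‖∑_{i=1}^n aᵢ eᵢ‖. In particular, the sequence (eₙ^{⊗k}) in ⊗^k c₀ is equivalent to the unit vector basis of c₀. -/
open Filter Topology Metric

noncomputable section

open scoped TensorProduct
lemma e_apply (m x : ℕ) : e m x = if x = m then 1 else 0 := rfl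

lemma abs_apply_le_norm (f : c0) (x : ℕ) : |f x| ≤ ‖f‖ := by
  rw [← ZeroAtInftyContinuousMap.norm_toBCF_eq_norm]
  simpa using f.toBCF.norm_coe_le_norm x

def evalAM (x : ℕ) : c0 →+ ℝ :=
  { toFun := fun f => f x, map_zero' := rfl, map_add' := fun f g => rfl }

lemma sum_apply_eval (n : ℕ) (c : Fin n → ℝ) (x : ℕ) :
    (∑ i : Fin n, c i • e ↑i) x = if hx : x < n then c ⟨x, hx⟩ else 0 := by
  have h0 : (∑ i : Fin n, c i • e ↑i) x = ∑ i : Fin n, c i * (e ↑i x) := by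
    have h := map_sum (evalAM x) (fun i : Fin n => c i • e (↑i : ℕ)) Finset.univ
    refine h.trans (Finset.sum_congr rfl fun i _ => ?_)
    show (c i • e ↑i) x = _
    rw [ZeroAtInftyContinuousMap.coe_smul, Pi.smul_apply, smul_eq_mul]
  rw [h0]
  split_ifs with hx
  · rw [Finset.sum_eq_single (⟨x, hx⟩ : Fin n)]
    · simp [e_apply]
    · intro i _ hi
      have : x ≠ ↑i := fun h => hi (by ext; simp [← h])
      simp [e_apply, this]
    · simp
  · apply Finset.sum_eq_zero
    intro i _
    have h2 : (↑i : ℕ) < n := i.2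
    have : x ≠ ↑i := by omega
    simp [e_apply, this]

lemma norm_sum_smul_e_le (n : ℕ) (c : Fin n → ℝ) (M : ℝ) (hM : 0 ≤ M)
    (h : ∀ i, |c i| ≤ M) : ‖∑ i : Fin n, c i • e ↑i‖ ≤ M := by
  rw [← ZeroAtInftyContinuousMap.norm_toBCF_eq_norm]
  rw [BoundedContinuousFunction.norm_le hM]
  intro x
  have hx : (∑ i : Fin n, c i • e ↑i).toBCF x = (∑ i : Fin n, c i • e ↑i) x := rfl
  rw [hx, Real.norm_eq_abs, sum_apply_eval]
  split_ifs with hlt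
  · exact h _
  · simpa using hM

lemma norm_sum_smul_e_eq (n : ℕ) (a : ℕ → ℝ) :
    ‖∑ i : Fin n, a ↑i • e ↑i‖ = ⨆ i : Fin n, |a ↑i| := by
  refine le_antisymm ?_ ?_
  · exact norm_sum_smul_e_le n _ _ (Real.iSup_nonneg fun i => abs_nonneg _)
      (fun i => le_ciSup (f := fun i : Fin n => |a ↑i|) (Set.Finite.bddAbove (Set.finite_range _)) i)
  · refine Real.iSup_le (fun i => ?_) (norm_nonneg _)
    have h1 := abs_apply_le_norm (∑ j : Fin n, a ↑j • e ↑j) ↑i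
    rw [sum_apply_eval] at h1
    rw [dif_pos i.2] at h1
    simpa using h1

noncomputable def sgn (b : Bool) : ℝ := if b then 1 else -1

lemma abs_sgn (b : Bool) : |sgn b| = 1 := by cases b <;> simp [sgn]

lemma sgn_mul_self (b : Bool) : sgn b * sgn b = 1 := by cases b <;> norm_num [sgn]

lemma sgn_not (b : Bool) : sgn (!b) = -sgn b := by cases b <;> simp [sgn]

lemma sum_sgn_mul_sgn (n : ℕ) (p q : Fin n) :
    ∑ b : Fin n → Bool, sgn (b p) * sgn (b q) = if p = q then (2:ℝ)^n else 0 := by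
  rcases eq_or_ne p q with rfl | hpq
  · rw [if_pos rfl, Finset.sum_congr rfl (fun b _ => sgn_mul_self (b p))]
    simp [Finset.card_univ]
  · rw [if_neg hpq]
    refine Finset.sum_involution (fun b _ => Function.update b p (!(b p))) ?_ ?_ (fun _ _ => Finset.mem_univ _) ?_
    · intro b _
      rw [Function.update_self, Function.update_of_ne (Ne.symm hpq), sgn_not]
      ring
    · intro b _ _
      intro hc
      have := congrFun hc p
      rw [Function.update_self] at this
      exact Bool.not_ne_self _ this
    · intro b _
      rw [Function.update_idem, Function.update_self, Bool.not_not, Function.update_eq_self]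

open PiTensorProduct
open scoped TensorProduct

noncomputable def cf (k' n : ℕ) (a : ℕ → ℝ) (ε : Fin k' → Fin n → Bool)
    (j : Fin (k' + 1)) : Fin n → ℝ :=
  Fin.lastCases (motive := fun _ => Fin n → ℝ)
    (fun i => a ↑i * ∏ l, sgn (ε l i)) (fun l i => sgn (ε l i)) j

lemma cf_castSucc (k' n : ℕ) (a : ℕ → ℝ) (ε : Fin k' → Fin n → Bool) (l : Fin k') :
    cf k' n a ε l.castSucc = fun i => sgn (ε l i) := by
  unfold cf
  rw [Fin.lastCases_castSucc]

lemma cf_last (k' n : ℕ) (a : ℕ → ℝ) (ε : Fin k' → Fin n → Bool) :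
    cf k' n a ε (Fin.last k') = fun i : Fin n => a ↑i * ∏ l, sgn (ε l i) := by
  unfold cf
  rw [Fin.lastCases_last]

noncomputable def vv (k' n : ℕ) (a : ℕ → ℝ) (ε : Fin k' → Fin n → Bool) :
    Fin (k' + 1) → c0 :=
  fun j => ∑ i : Fin n, cf k' n a ε j i • e ↑i

lemma sum_eps (k' n : ℕ) (f : Fin (k' + 1) → Fin n) :
    ∑ ε : Fin k' → Fin n → Bool, ∏ l : Fin k',
      (sgn (ε l (f l.castSucc)) * sgn (ε l (f (Fin.last k')))) =
    if (∀ l : Fin k', f l.castSucc = f (Fin.last k')) then ((2:ℝ)^n)^k' else 0 := by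
  classical
  have h1 : ∑ ε : Fin k' → Fin n → Bool, ∏ l : Fin k',
      (sgn (ε l (f l.castSucc)) * sgn (ε l (f (Fin.last k')))) =
      ∏ l : Fin k', ∑ b : Fin n → Bool, sgn (b (f l.castSucc)) * sgn (b (f (Fin.last k'))) := by
    rw [Finset.prod_univ_sum, Fintype.piFinset_univ]
  rw [h1]
  rw [Finset.prod_congr rfl (fun l _ => sum_sgn_mul_sgn n (f l.castSucc) (f (Fin.last k')))]
  by_cases h : ∀ l : Fin k', f l.castSucc = f (Fin.last k')
  · rw [if_pos h, Finset.prod_congr rfl (fun l _ => if_pos (h l)), Finset.prod_const,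
      Finset.card_univ, Fintype.card_fin]
  · rw [if_neg h]
    push_neg at h
    obtain ⟨l, hl⟩ := h
    exact Finset.prod_eq_zero (Finset.mem_univ l) (if_neg hl)

lemma rep (k' n : ℕ) (a : ℕ → ℝ) :
    ∑ ε : Fin k' → Fin n → Bool, tprod ℝ (vv k' n a ε)
      = ((2:ℝ)^n)^k' • ∑ i : Fin n, a ↑i • tprod ℝ (fun _ : Fin (k'+1) => e ↑i) := by
  classical
  have h1 : ∀ ε : Fin k' → Fin n → Bool, tprod ℝ (vv k' n a ε)
      = ∑ f : Fin (k'+1) → Fin n, (∏ j, cf k' n a ε j (f j)) • tprod ℝ (fun j => e ↑(f j)) := by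
    intro ε
    unfold vv
    rw [MultilinearMap.map_sum (PiTensorProduct.tprod ℝ) (fun j i => cf k' n a ε j i • e ↑i)]
    exact Finset.sum_congr rfl fun f _ =>
      MultilinearMap.map_smul_univ (PiTensorProduct.tprod ℝ) (fun j => cf k' n a ε j (f j)) (fun j => e ↑(f j))
  rw [Finset.sum_congr rfl fun ε _ => h1 ε, Finset.sum_comm]
  have h2 : ∀ f : Fin (k'+1) → Fin n,
      ∑ ε : Fin k' → Fin n → Bool, (∏ j, cf k' n a ε j (f j)) • tprod ℝ (fun j => e ↑(f j))
      = (a ↑(f (Fin.last k')) *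
          (if (∀ l : Fin k', f l.castSucc = f (Fin.last k')) then ((2:ℝ)^n)^k' else 0))
            • tprod ℝ (fun j => e ↑(f j)) := by
    intro f
    rw [← Finset.sum_smul]
    congr 1
    have h3 : ∀ ε : Fin k' → Fin n → Bool, (∏ j, cf k' n a ε j (f j))
        = a ↑(f (Fin.last k')) *
          ∏ l : Fin k', (sgn (ε l (f l.castSucc)) * sgn (ε l (f (Fin.last k')))) := by
      intro ε
      rw [Fin.prod_univ_castSucc (f := fun j => cf k' n a ε j (f j))]
      simp only [cf_castSucc, cf_last]
      rw [Finset.prod_mul_distrib]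
      ring
    rw [Finset.sum_congr rfl fun ε _ => h3 ε, ← Finset.mul_sum, sum_eps]
  rw [Finset.sum_congr rfl fun f _ => h2 f]
  -- restrict to constant functions
  have hconst : ∀ i : Fin n, ((fun _ : Fin (k'+1) => i) : Fin (k'+1) → Fin n) ∈
      Finset.image (fun i : Fin n => (fun _ : Fin (k'+1) => i)) Finset.univ := by
    intro i; exact Finset.mem_image_of_mem _ (Finset.mem_univ i)
  rw [← Finset.sum_subset (Finset.subset_univ
      (Finset.image (fun i : Fin n => (fun _ : Fin (k'+1) => i)) Finset.univ)) ?_]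
  · rw [Finset.sum_image ?_]
    · rw [Finset.smul_sum]
      refine Finset.sum_congr rfl fun i _ => ?_
      rw [if_pos (fun l => rfl), smul_smul]
      ring_nf
    · intro i _ i' _ hii'
      exact congrFun hii' (Fin.last k')
  · intro f _ hf
    have : ¬ (∀ l : Fin k', f l.castSucc = f (Fin.last k')) := by
      intro hall
      apply hf
      have : f = fun _ : Fin (k'+1) => f (Fin.last k') := by
        funext j
        induction j using Fin.lastCases with
        | last => rfl
        | cast l => exact hall l
      rw [this]
      exact hconst _
    rw [if_neg this, mul_zero, zero_smul]

lemma upper (k' n : ℕ) (a : ℕ → ℝ) :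
    projectiveSeminorm (∑ i : Fin n, a ↑i • tprod ℝ (fun _ : Fin (k'+1) => e ↑i))
      ≤ ⨆ i : Fin n, |a ↑i| := by
  classical
  set M := ⨆ i : Fin n, |a ↑i| with hMdef
  have hM : 0 ≤ M := Real.iSup_nonneg fun i => abs_nonneg _
  have haM : ∀ i : Fin n, |a ↑i| ≤ M :=
    fun i => le_ciSup (f := fun i : Fin n => |a ↑i|) (Set.Finite.bddAbove (Set.finite_range _)) i
  have hpos : (0:ℝ) < ((2:ℝ)^n)^k' := by positivity
  have hz : (∑ i : Fin n, a ↑i • tprod ℝ (fun _ : Fin (k'+1) => e ↑i))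
      = (((2:ℝ)^n)^k')⁻¹ • ∑ ε : Fin k' → Fin n → Bool, tprod ℝ (vv k' n a ε) := by
    rw [rep, smul_smul, inv_mul_cancel₀ (ne_of_gt hpos), one_smul]
  rw [hz, map_smul_eq_mul]
  have hterm : ∀ ε : Fin k' → Fin n → Bool,
      projectiveSeminorm (tprod ℝ (vv k' n a ε)) ≤ M := by
    intro ε
    refine le_trans (projectiveSeminorm_tprod_le (vv k' n a ε)) ?_
    have h1 : ∀ l : Fin k', ‖vv k' n a ε l.castSucc‖ ≤ 1 := by
      intro l
      refine norm_sum_smul_e_le n _ 1 zero_le_one fun i => ?_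
      rw [cf_castSucc]
      rw [abs_sgn]
    have h2 : ‖vv k' n a ε (Fin.last k')‖ ≤ M := by
      refine norm_sum_smul_e_le n _ M hM fun i => ?_
      rw [cf_last]
      have : |a ↑i * ∏ l, sgn (ε l i)| = |a ↑i| := by
        rw [abs_mul, Finset.abs_prod, Finset.prod_congr rfl fun l _ => abs_sgn (ε l i),
          Finset.prod_const_one, mul_one]
      rw [this]
      exact haM i
    calc ∏ j, ‖vv k' n a ε j‖
        = (∏ l : Fin k', ‖vv k' n a ε l.castSucc‖) * ‖vv k' n a ε (Fin.last k')‖ :=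
          Fin.prod_univ_castSucc _
      _ ≤ 1 * M := by
          refine mul_le_mul ?_ h2 (norm_nonneg _) zero_le_one
          exact Finset.prod_le_one (fun l _ => norm_nonneg _) (fun l _ => h1 l)
      _ = M := one_mul M
  have hsum : projectiveSeminorm (∑ ε : Fin k' → Fin n → Bool, tprod ℝ (vv k' n a ε))
      ≤ ((2:ℝ)^n)^k' * M := by
    refine le_trans (Finset.le_sum_of_subadditive projectiveSeminorm (map_zero _).le
      (fun x y => map_add_le_add _ x y) _ _) ?_
    refine le_trans (Finset.sum_le_sum fun ε _ => hterm ε) ?_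
    rw [Finset.sum_const, Finset.card_univ, nsmul_eq_mul]
    have hcard : (Fintype.card (Fin k' → Fin n → Bool) : ℝ) = ((2:ℝ)^n)^k' := by
      rw [Fintype.card_fun, Fintype.card_fun]
      push_cast
      simp
    rw [hcard]
  calc |(((2:ℝ)^n)^k')⁻¹| * projectiveSeminorm (∑ ε : Fin k' → Fin n → Bool, tprod ℝ (vv k' n a ε))
      ≤ (((2:ℝ)^n)^k')⁻¹ * (((2:ℝ)^n)^k' * M) := by
        rw [abs_of_pos (inv_pos.mpr hpos)]
        exact mul_le_mul_of_nonneg_left hsum (le_of_lt (inv_pos.mpr hpos))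
    _ = M := by
        rw [← mul_assoc, inv_mul_cancel₀ (ne_of_gt hpos), one_mul]

noncomputable def ev (x : ℕ) : c0 →L[ℝ] ℝ :=
  LinearMap.mkContinuous
    { toFun := fun f => f x, map_add' := fun f g => rfl, map_smul' := fun c f => rfl } 1
    (fun f => by simpa using abs_apply_le_norm f x)

lemma ev_norm_le (x : ℕ) : ‖ev x‖ ≤ 1 :=
  LinearMap.mkContinuous_norm_le _ zero_le_one _

lemma ev_apply (x : ℕ) (f : c0) : ev x f = f x := rfl

lemma lower (k' n : ℕ) (a : ℕ → ℝ) :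
    (⨆ i : Fin n, |a ↑i|) ≤
      projectiveSeminorm (∑ i : Fin n, a ↑i • tprod ℝ (fun _ : Fin (k'+1) => e ↑i)) := by
  classical
  refine Real.iSup_le (fun i₀ => ?_) (apply_nonneg _ _)
  set P := (ContinuousMultilinearMap.mkPiAlgebra ℝ (Fin (k'+1)) ℝ).compContinuousLinearMap
    (fun _ => ev ↑i₀) with hPdef
  have hP : ‖P‖ ≤ 1 := by
    refine le_trans (ContinuousMultilinearMap.norm_compContinuousLinearMap_le _ _) ?_
    rw [ContinuousMultilinearMap.norm_mkPiAlgebra, one_mul]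
    exact Finset.prod_le_one (fun _ _ => norm_nonneg _) (fun _ _ => ev_norm_le _)
  have heval : lift P.toMultilinearMap
      (∑ i : Fin n, a ↑i • tprod ℝ (fun _ : Fin (k'+1) => e ↑i)) = a ↑i₀ := by
    rw [map_sum]
    have hterm : ∀ i : Fin n, lift P.toMultilinearMap
        (a ↑i • tprod ℝ (fun _ : Fin (k'+1) => e ↑i))
        = a ↑i * (if (↑i₀ : ℕ) = ↑i then (1:ℝ) else 0) ^ (k'+1) := by
      intro i
      rw [map_smul, lift.tprod]
      have : P (fun _ : Fin (k'+1) => e ↑i) = (if (↑i₀ : ℕ) = ↑i then (1:ℝ) else 0) ^ (k'+1) := by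
        rw [hPdef]
        rw [ContinuousMultilinearMap.compContinuousLinearMap_apply]
        rw [ContinuousMultilinearMap.mkPiAlgebra_apply]
        rw [Finset.prod_congr rfl (fun j _ => show ev ↑i₀ (e ↑i) = if (↑i₀:ℕ) = ↑i then (1:ℝ) else 0
          from by rw [ev_apply, e_apply])]
        rw [Finset.prod_const, Finset.card_univ, Fintype.card_fin]
      rw [ContinuousMultilinearMap.coe_coe, this, smul_eq_mul]
    rw [Finset.sum_congr rfl fun i _ => hterm i]
    rw [Finset.sum_eq_single i₀]
    · rw [if_pos rfl, one_pow, mul_one]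
    · intro i _ hi
      have : (↑i₀ : ℕ) ≠ ↑i := fun h => hi (Fin.ext h.symm)
      rw [if_neg this, zero_pow (Nat.succ_ne_zero k'), mul_zero]
    · intro h
      exact absurd (Finset.mem_univ i₀) h
  have hle := norm_eval_le_projectiveSeminorm P
    (∑ i : Fin n, a ↑i • tprod ℝ (fun _ : Fin (k'+1) => e ↑i))
  rw [heval, Real.norm_eq_abs] at hle
  calc |a ↑i₀| ≤ projectiveSeminorm (∑ i : Fin n, a ↑i • tprod ℝ (fun _ : Fin (k'+1) => e ↑i)) * ‖P‖ := by rw [mul_comm]; exact hle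
    _ ≤ projectiveSeminorm (∑ i : Fin n, a ↑i • tprod ℝ (fun _ : Fin (k'+1) => e ↑i)) * 1 :=
        mul_le_mul_of_nonneg_left hP (apply_nonneg _ _)
    _ = _ := mul_one _



open PiTensorProduct in
/-- The diagonal tensors `eₙ ⊗ ⋯ ⊗ eₙ` of the unit vector basis of `c₀` span isometric copies
of the finite-dimensional pieces of `c₀`; in particular `(eₙ^{⊗k})` is equivalent to the
`c₀`-basis for the projective seminorm. -/
theorem projectiveSeminorm_basis_diagonal_tensors (k : ℕ) (hk : 1 ≤ k) :
    (∀ (n : ℕ) (a : ℕ → ℝ),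
      projectiveSeminorm (∑ i ∈ Finset.range n, a i • tprod ℝ (fun _ : Fin k => e i)) =
        ‖∑ i ∈ Finset.range n, a i • e i‖ ∧
      ‖∑ i ∈ Finset.range n, a i • e i‖ = ⨆ i : Fin n, |a i|) ∧
    (∃ c C : ℝ, 0 < c ∧ c ≤ C ∧ ∀ (n : ℕ) (a : ℕ → ℝ),
      c * (⨆ i : Fin n, |a i|) ≤
        projectiveSeminorm (∑ i ∈ Finset.range n, a i • tprod ℝ (fun _ : Fin k => e i)) ∧
      projectiveSeminorm (∑ i ∈ Finset.range n, a i • tprod ℝ (fun _ : Fin k => e i)) ≤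
        C * (⨆ i : Fin n, |a i|)) := by
  obtain ⟨k', rfl⟩ : ∃ k', k = k' + 1 := ⟨k - 1, (Nat.succ_pred_eq_of_pos hk).symm⟩
  have key : ∀ (n : ℕ) (a : ℕ → ℝ),
      projectiveSeminorm (∑ i ∈ Finset.range n, a i • tprod ℝ (fun _ : Fin (k'+1) => e i)) =
        ⨆ i : Fin n, |a i| ∧
      ‖∑ i ∈ Finset.range n, a i • e i‖ = ⨆ i : Fin n, |a i| := by
    intro n a
    have h1 : ∑ i ∈ Finset.range n, a i • tprod ℝ (fun _ : Fin (k'+1) => e i)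
        = ∑ i : Fin n, a ↑i • tprod ℝ (fun _ : Fin (k'+1) => e ↑i) :=
      Finset.sum_range _
    have h2 : ∑ i ∈ Finset.range n, a i • e i = ∑ i : Fin n, a ↑i • e ↑i :=
      Finset.sum_range _
    refine ⟨?_, ?_⟩
    · rw [h1]
      exact le_antisymm (upper k' n a) (lower k' n a)
    · rw [h2]
      exact norm_sum_smul_e_eq n a
  constructor
  · intro n a
    obtain ⟨hp, hn⟩ := key n a
    exact ⟨hp.trans hn.symm, hn⟩
  · refine ⟨1, 1, one_pos, le_refl 1, fun n a => ?_⟩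
    obtain ⟨hp, _⟩ := key n a
    rw [hp, one_mul]
    exact ⟨le_refl _, le_refl _⟩
end
end

section
/- Let k ≥ 1 be an integer. If a sequence (xₙ) in c₀ is equivalent to the c₀-basis, then the sequence of diagonal tensors (xₙ^{⊗k}) in the k-fold algebraic tensor product ⊗^k c₀ is equivalent to the c₀-basis with respect to the projective seminorm: there exist constants 0 < c ≤ C such that c·maxᵢ|aᵢ| ≤ π(∑_{i=1}^n aᵢ · x_i^{⊗k}) ≤ C·maxᵢ|aᵢ| for all n and all scalars a₁,…,aₙ. -/
open Filter Topology Metric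

noncomputable section

open scoped TensorProduct

namespace DiagAux

open Finset

/-- sign of a boolean -/
def sgn (b : Bool) : ℝ := if b then 1 else -1

lemma abs_sgn (b : Bool) : |sgn b| = 1 := by cases b <;> simp [sgn]

lemma sgn_mul_self (b : Bool) : sgn b * sgn b = 1 := by cases b <;> simp [sgn]

lemma sgn_not (b : Bool) : sgn (!b) = - sgn b := by cases b <;> simp [sgn]

lemma seminorm_sum_le {𝕜 V : Type*} [NormedField 𝕜] [AddCommGroup V] [Module 𝕜 V]
    (p : Seminorm 𝕜 V) {ι : Type*} (s : Finset ι) (f : ι → V) :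
    p (∑ i ∈ s, f i) ≤ ∑ i ∈ s, p (f i) := by
  classical
  induction s using Finset.induction with
  | empty => simp
  | insert _ _ h ih =>
    rw [Finset.sum_insert h, Finset.sum_insert h]
    exact le_trans (map_add_le_add p _ _) (by linarith)

lemma sum_sgn_mul (n : ℕ) (i j : Fin n) :
    ∑ τ : Fin n → Bool, sgn (τ i) * sgn (τ j) = if i = j then (2:ℝ)^n else 0 := by
  by_cases h : i = j
  · subst h
    rw [if_pos rfl]
    simp only [sgn_mul_self]
    rw [Finset.sum_const, Finset.card_univ]
    simp [Fintype.card_fun]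
  · rw [if_neg h]
    refine Finset.sum_ninvolution (fun τ => Function.update τ i (!(τ i))) ?_ ?_ ?_ ?_
    · intro τ
      rw [Function.update_self, Function.update_of_ne (fun hji : j = i => h hji.symm)]
      rw [sgn_not]
      ring
    · intro τ _
      intro hτ
      have := congrFun hτ i
      simp only [Function.update_self] at this
      exact (Bool.not_ne_self _) this
    · intro τ; exact Finset.mem_univ _
    · intro τ
      funext j'
      by_cases hj : j' = i
      · subst hj; simp [Function.update_self]
      · simp [Function.update_of_ne hj]


set_option maxHeartbeats 1000000 in
lemma sum_sigma_sgn (n m : ℕ) (r : Fin (m+1) → Fin n) :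
    ∑ σ : Fin m → (Fin n → Bool), ∏ l : Fin m, (sgn (σ l (r 0)) * sgn (σ l (r l.succ)))
      = if ∀ j, r j = r 0 then (2:ℝ)^(n*m) else 0 := by
  rw [show (∑ σ : Fin m → Fin n → Bool, ∏ l : Fin m, sgn (σ l (r 0)) * sgn (σ l (r l.succ)))
      = ∏ l : Fin m, ∑ τ : Fin n → Bool, sgn (τ (r 0)) * sgn (τ (r l.succ)) from
      (Fintype.prod_sum (fun (l : Fin m) (τ : Fin n → Bool) => sgn (τ (r 0)) * sgn (τ (r l.succ)))).symm]
  rw [Finset.prod_congr rfl (fun (l : Fin m) _ => sum_sgn_mul n (r 0) (r l.succ))]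
  by_cases h : ∀ j, r j = r 0
  · rw [if_pos h]
    have : ∀ l : Fin m, (if r 0 = r l.succ then (2:ℝ)^n else 0) = (2:ℝ)^n := by
      intro l; rw [if_pos (h l.succ).symm]
    rw [Finset.prod_congr rfl (fun l _ => this l), Finset.prod_const, Finset.card_univ,
      Fintype.card_fin, ← pow_mul]
  · rw [if_neg h]
    push_neg at h
    obtain ⟨j, hj⟩ := h
    have hj0 : j ≠ 0 := fun hh => hj (hh ▸ rfl)
    obtain ⟨l, rfl⟩ := Fin.exists_succ_eq_of_ne_zero hj0
    exact Finset.prod_eq_zero (Finset.mem_univ l) (by rw [if_neg (fun hh => hj hh.symm)])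


/-- coefficients in the Rademacher averaging representation -/
def coef {n m : ℕ} (a : Fin n → ℝ) (σ : Fin m → Fin n → Bool) (j : Fin (m+1)) (i : Fin n) : ℝ :=
  Fin.cases (a i * ∏ l : Fin m, sgn (σ l i)) (fun l => sgn (σ l i)) j

@[simp] lemma coef_zero {n m : ℕ} (a : Fin n → ℝ) (σ : Fin m → Fin n → Bool) (i : Fin n) :
    coef a σ 0 i = a i * ∏ l : Fin m, sgn (σ l i) := rfl

@[simp] lemma coef_succ {n m : ℕ} (a : Fin n → ℝ) (σ : Fin m → Fin n → Bool) (l : Fin m)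
    (i : Fin n) : coef a σ l.succ i = sgn (σ l i) := by
  simp [coef]


set_option maxHeartbeats 1000000 in
lemma diag_identity {M : Type*} [AddCommGroup M] [Module ℝ M] (n m : ℕ)
    (a : Fin n → ℝ) (y : Fin n → M) :
    ∑ σ : Fin m → (Fin n → Bool),
      PiTensorProduct.tprod ℝ (fun j : Fin (m+1) => ∑ i : Fin n, coef a σ j i • y i)
    = (2:ℝ)^(n*m) • ∑ i : Fin n, a i • PiTensorProduct.tprod ℝ (fun _ : Fin (m+1) => y i) := by
  classical
  have step1 : ∀ σ : Fin m → Fin n → Bool,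
      PiTensorProduct.tprod ℝ (fun j : Fin (m+1) => ∑ i : Fin n, coef a σ j i • y i)
      = ∑ r : Fin (m+1) → Fin n,
          (∏ j : Fin (m+1), coef a σ j (r j)) • PiTensorProduct.tprod ℝ (fun j => y (r j)) := by
    intro σ
    rw [MultilinearMap.map_sum (PiTensorProduct.tprod ℝ) (fun (j : Fin (m+1)) (i : Fin n) => coef a σ j i • y i)]
    exact Finset.sum_congr rfl fun r _ =>
      MultilinearMap.map_smul_univ (PiTensorProduct.tprod ℝ) (fun j => coef a σ j (r j)) (fun j => y (r j))
  rw [Finset.sum_congr rfl fun σ _ => step1 σ, Finset.sum_comm]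
  have step2 : ∀ r : Fin (m+1) → Fin n,
      (∑ σ : Fin m → Fin n → Bool, (∏ j : Fin (m+1), coef a σ j (r j)) •
          PiTensorProduct.tprod ℝ (fun j => y (r j)))
      = (if ∀ j, r j = r 0 then a (r 0) * (2:ℝ)^(n*m) else 0) •
          PiTensorProduct.tprod ℝ (fun j => y (r j)) := by
    intro r
    rw [← Finset.sum_smul]
    congr 1
    have : ∀ σ : Fin m → Fin n → Bool, (∏ j : Fin (m+1), coef a σ j (r j))
        = a (r 0) * ∏ l : Fin m, (sgn (σ l (r 0)) * sgn (σ l (r l.succ))) := by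
      intro σ
      rw [Fin.prod_univ_succ]
      simp only [coef_zero, coef_succ]
      rw [mul_assoc, ← Finset.prod_mul_distrib]
    rw [Finset.sum_congr rfl fun σ _ => this σ, ← Finset.mul_sum, sum_sigma_sgn, mul_ite, mul_zero]
  rw [Finset.sum_congr rfl fun r _ => step2 r]
  have key : ∀ r : Fin (m+1) → Fin n,
      (if ∀ j, r j = r 0 then a (r 0) * (2:ℝ)^(n*m) else 0) • PiTensorProduct.tprod ℝ (fun j => y (r j))
      = ∑ i : Fin n, (if r = (fun _ => i) then
          (a (r 0) * (2:ℝ)^(n*m)) • PiTensorProduct.tprod ℝ (fun j => y (r j)) else 0) := by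
    intro r
    by_cases h : ∀ j, r j = r 0
    · rw [if_pos h]
      have h2 : ∀ i : Fin n, (if r = (fun _ => i) then
            (a (r 0) * (2:ℝ)^(n*m)) • PiTensorProduct.tprod ℝ (fun j => y (r j)) else 0)
          = if r 0 = i then (a (r 0) * (2:ℝ)^(n*m)) • PiTensorProduct.tprod ℝ (fun j => y (r j)) else 0 := by
        intro i
        refine if_congr ⟨fun hh => by rw [hh], fun hh => funext fun j => (h j).trans hh⟩ rfl rfl
      rw [Finset.sum_congr rfl fun i _ => h2 i, Finset.sum_ite_eq, if_pos (Finset.mem_univ _)]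
    · rw [if_neg h, zero_smul]
      symm
      refine Finset.sum_eq_zero fun i _ => ?_
      rw [if_neg]
      intro hri
      subst hri
      exact h fun j => rfl
  rw [Finset.sum_congr rfl fun r _ => key r, Finset.sum_comm, Finset.smul_sum]
  refine Finset.sum_congr rfl fun i _ => ?_
  rw [Finset.sum_ite_eq' Finset.univ (fun _ => i)
    (fun r => (a (r 0) * (2:ℝ)^(n*m)) • PiTensorProduct.tprod ℝ (fun j => y (r j))), if_pos (Finset.mem_univ _)]
  rw [smul_smul, mul_comm ((2:ℝ)^(n*m)), mul_comm (a i)]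

end DiagAux


set_option maxHeartbeats 2000000 in
open PiTensorProduct in
/-- The diagonal polynomial `γₖ : c₀ → ⊗^k c₀` takes sequences equivalent to the `c₀`-basis to
sequences equivalent to the `c₀`-basis for the projective seminorm. -/
theorem diagonal_tensor_equiv_c0_basis_on_c0
    (k : ℕ) (hk : 1 ≤ k) (x : ℕ → c0) (hx : IsEquivC0Basis x) :
    ∃ c C : ℝ, 0 < c ∧ c ≤ C ∧ ∀ (n : ℕ) (a : ℕ → ℝ),
      c * (⨆ i : Fin n, |a i|) ≤
        projectiveSeminorm (∑ i ∈ Finset.range n, a i • tprod ℝ (fun _ : Fin k => x i)) ∧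
      projectiveSeminorm (∑ i ∈ Finset.range n, a i • tprod ℝ (fun _ : Fin k => x i)) ≤
        C * (⨆ i : Fin n, |a i|) := by
  classical
  classical
  obtain ⟨c, C, hc, hcC, hbound⟩ := hx
  have hC0 : (0:ℝ) < C := lt_of_lt_of_le hc hcC
  obtain ⟨m, rfl⟩ : ∃ m, k = m + 1 := ⟨k - 1, (Nat.succ_pred_eq_of_pos hk).symm⟩
  have hfin : ∀ (n : ℕ) (b : Fin n → ℝ),
      c * (⨆ i : Fin n, |b i|) ≤ ‖∑ i : Fin n, b i • x i‖ ∧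
      ‖∑ i : Fin n, b i • x i‖ ≤ C * (⨆ i : Fin n, |b i|) := by
    intro n b
    set a : ℕ → ℝ := fun j => if h : j < n then b ⟨j, h⟩ else 0 with ha
    have h1 : ∀ i : Fin n, a i = b i := fun i => dif_pos i.isLt
    have h2 : (∑ j ∈ Finset.range n, a j • x j) = ∑ i : Fin n, b i • x i := by
      rw [← Fin.sum_univ_eq_sum_range (fun j => a j • x j) n]
      exact Finset.sum_congr rfl fun i _ => by rw [h1]
    have h3 : (⨆ i : Fin n, |a i|) = ⨆ i : Fin n, |b i| := by
      congr 1; funext i; rw [h1]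
    have := hbound n a
    rw [h2, h3] at this
    exact this
  refine ⟨c ^ (m+1), C ^ (m+1), pow_pos hc _, pow_le_pow_left₀ hc.le hcC _, ?_⟩
  intro n a
  set b : Fin n → ℝ := fun i => a i with hb
  have hz : (∑ i ∈ Finset.range n, a i • tprod ℝ (fun _ : Fin (m+1) => x i))
      = ∑ i : Fin n, b i • tprod ℝ (fun _ : Fin (m+1) => x (i : ℕ)) := by
    rw [← Fin.sum_univ_eq_sum_range (fun j => a j • tprod ℝ (fun _ : Fin (m+1) => x j)) n]
  rw [hz]
  set z := ∑ i : Fin n, b i • tprod ℝ (fun _ : Fin (m+1) => x (i : ℕ)) with hzdef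
  set A : ℝ := ⨆ i : Fin n, |a i| with hA
  have hA0 : 0 ≤ A := Real.iSup_nonneg fun i => abs_nonneg _
  have hAle : ∀ i : Fin n, |b i| ≤ A := by
    intro i
    rw [hA]
    exact le_ciSup (Set.Finite.bddAbove (Set.finite_range fun i' : Fin n => |a (i' : ℕ)|)) i
  constructor
  · -- lower bound
    have hfunc : ∀ i : Fin n, |b i| ≤ (c ^ (m+1))⁻¹ * projectiveSeminorm z := by
      intro i
      have hli : LinearIndependent ℝ (fun i : Fin n => x (i : ℕ)) := by
        rw [Fintype.linearIndependent_iff]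
        intro g hg i'
        have h1 := (hfin n g).1
        rw [hg, norm_zero] at h1
        have hS : (⨆ i'' : Fin n, |g i''|) ≤ 0 := by nlinarith
        have := le_trans (le_ciSup (Set.Finite.bddAbove (Set.finite_range fun i'' => |g i''|)) i') hS
        exact abs_nonpos_iff.mp this
      set W := Submodule.span ℝ (Set.range (fun i : Fin n => x (i : ℕ))) with hW
      set B : Module.Basis (Fin n) ℝ W := Module.Basis.span hli with hB
      have hrepr : ∀ w : W, (w : c0) = ∑ i' : Fin n, B.repr w i' • x (i' : ℕ) := by
        intro w
        have h := congrArg (Subtype.val) (B.sum_repr w)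
        rw [← h]
        rw [AddSubmonoidClass.coe_finset_sum]
        exact Finset.sum_congr rfl fun i' _ => by
          rw [SetLike.val_smul, hB, Module.Basis.span_apply]
      have hcoordbd : ∀ w : W, ‖B.coord i w‖ ≤ c⁻¹ * ‖w‖ := by
        intro w
        have h1 := (hfin n (fun i' => B.repr w i')).1
        rw [← hrepr w] at h1
        have h2 : |B.repr w i| ≤ ⨆ i', |B.repr w i'| :=
          le_ciSup (f := fun i' : Fin n => |B.repr w i'|)
            (Set.Finite.bddAbove (Set.finite_range _)) i
        have hnw : ‖(w : c0)‖ = ‖w‖ := rfl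
        rw [hnw] at h1
        rw [Module.Basis.coord_apply, Real.norm_eq_abs]
        rw [inv_mul_eq_div, le_div_iff₀ hc, mul_comm]
        nlinarith
      obtain ⟨g, hg_ext, hg_norm⟩ := exists_extension_norm_eq W
        (LinearMap.mkContinuous (B.coord i) c⁻¹ hcoordbd)
      have hgnorm : ‖g‖ ≤ c⁻¹ := by
        rw [hg_norm]
        exact LinearMap.mkContinuous_norm_le _ (inv_nonneg.mpr hc.le) _
      have hgy : ∀ j : Fin n, g (x (j : ℕ)) = if i = j then 1 else 0 := by
        intro j
        have hymem : x (j : ℕ) ∈ W := Submodule.subset_span (Set.mem_range_self j)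
        have hbj : (⟨x (j : ℕ), hymem⟩ : W) = B j := by
          apply Subtype.ext
          rw [hB, Module.Basis.span_apply]
        have e1 : g (x (j : ℕ)) = ((B.coord i).mkContinuous c⁻¹ hcoordbd) (B j) := by
          rw [← hbj]; exact hg_ext ⟨x (j : ℕ), hymem⟩
        rw [e1, LinearMap.mkContinuous_apply, Module.Basis.coord_apply, Module.Basis.repr_self,
          Finsupp.single_apply]
        by_cases hij : i = j
        · rw [if_pos hij, if_pos hij.symm]
        · rw [if_neg hij, if_neg (fun hh => hij hh.symm)]
      set F := (ContinuousMultilinearMap.mkPiAlgebra ℝ (Fin (m+1)) ℝ).compContinuousLinearMap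
        (fun _ : Fin (m+1) => g) with hF
      have hFnorm : ‖F‖ ≤ c⁻¹ ^ (m+1) := by
        refine le_trans (ContinuousMultilinearMap.norm_compContinuousLinearMap_le _ _) ?_
        rw [ContinuousMultilinearMap.norm_mkPiAlgebra, one_mul]
        calc ∏ _j : Fin (m+1), ‖g‖ ≤ ∏ _j : Fin (m+1), c⁻¹ :=
              Finset.prod_le_prod (fun _ _ => norm_nonneg _) (fun _ _ => hgnorm)
          _ = c⁻¹ ^ (m+1) := by rw [Finset.prod_const, Finset.card_univ, Fintype.card_fin]
      have hFeval : lift F.toMultilinearMap z = b i := by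
        rw [hzdef, map_sum]
        have hterm : ∀ j : Fin n,
            lift F.toMultilinearMap (b j • tprod ℝ fun _ : Fin (m+1) => x (j : ℕ))
            = if i = j then b j else 0 := by
          intro j
          rw [map_smul, lift.tprod, ContinuousMultilinearMap.coe_coe]
          have : F (fun _ : Fin (m+1) => x (j : ℕ)) = if i = j then 1 else 0 := by
            rw [hF]
            rw [ContinuousMultilinearMap.compContinuousLinearMap_apply,
              ContinuousMultilinearMap.mkPiAlgebra_apply]
            rw [Finset.prod_congr rfl fun (_ : Fin (m+1)) _ => hgy j, Finset.prod_const,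
              Finset.card_univ, Fintype.card_fin]
            by_cases hij : i = j
            · rw [if_pos hij, one_pow]
            · rw [if_neg hij, zero_pow (Nat.succ_ne_zero m)]
          rw [this, smul_eq_mul]
          by_cases hij : i = j
          · rw [if_pos hij, if_pos hij, mul_one]
          · rw [if_neg hij, if_neg hij, mul_zero]
        rw [Finset.sum_congr rfl fun j _ => hterm j, Finset.sum_ite_eq, if_pos (Finset.mem_univ _)]
      have hev := norm_eval_le_projectiveSeminorm F z
      rw [hFeval, Real.norm_eq_abs] at hev
      calc |b i| ≤ projectiveSeminorm z * ‖F‖ := by rw [mul_comm]; exact hev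
        _ ≤ projectiveSeminorm z * (c⁻¹ ^ (m+1)) :=
            mul_le_mul_of_nonneg_left hFnorm (apply_nonneg _ _)
        _ = (c ^ (m+1))⁻¹ * projectiveSeminorm z := by rw [inv_pow, mul_comm]
    have hAle2 : A ≤ (c ^ (m+1))⁻¹ * projectiveSeminorm z :=
      Real.iSup_le hfunc
        (mul_nonneg (inv_nonneg.mpr (pow_pos hc _).le) (apply_nonneg _ _))
    calc c ^ (m+1) * A ≤ c ^ (m+1) * ((c ^ (m+1))⁻¹ * projectiveSeminorm z) :=
          mul_le_mul_of_nonneg_left hAle2 (pow_pos hc _).le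
      _ = projectiveSeminorm z := by
          rw [← mul_assoc, mul_inv_cancel₀ (pow_pos hc _).ne', one_mul]
  · -- upper bound
    have hid := DiagAux.diag_identity n m b (fun i : Fin n => x (i : ℕ))
    have h2 : ((2:ℝ)^(n*m)) ≠ 0 := by positivity
    have hz2 : z = ((2:ℝ)^(n*m))⁻¹ • ∑ σ : Fin m → Fin n → Bool,
        tprod ℝ (fun j : Fin (m+1) => ∑ i : Fin n, DiagAux.coef b σ j i • x (i : ℕ)) := by
      rw [hid, smul_smul, inv_mul_cancel₀ h2, one_smul, hzdef]
    rw [hz2, map_smul_eq_mul]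
    have hbd : ∀ σ : Fin m → Fin n → Bool,
        projectiveSeminorm (tprod ℝ (fun j : Fin (m+1) => ∑ i : Fin n, DiagAux.coef b σ j i • x (i : ℕ)))
        ≤ C ^ (m+1) * A := by
      intro σ
      refine le_trans (projectiveSeminorm_tprod_le _) ?_
      rw [Fin.prod_univ_succ]
      have h0 : ‖∑ i : Fin n, DiagAux.coef b σ 0 i • x (i : ℕ)‖ ≤ C * A := by
        refine le_trans (hfin n (fun i => DiagAux.coef b σ 0 i)).2 ?_
        refine mul_le_mul_of_nonneg_left ?_ hC0.le
        refine Real.iSup_le (fun i => ?_) hA0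
        rw [DiagAux.coef_zero, abs_mul, Finset.abs_prod,
          Finset.prod_congr rfl fun (l : Fin m) _ => DiagAux.abs_sgn (σ l i),
          Finset.prod_const_one, mul_one]
        exact hAle i
      have hsuc : ∀ l : Fin m, ‖∑ i : Fin n, DiagAux.coef b σ l.succ i • x (i : ℕ)‖ ≤ C := by
        intro l
        refine le_trans (hfin n (fun i => DiagAux.coef b σ l.succ i)).2 ?_
        calc C * (⨆ i : Fin n, |DiagAux.coef b σ l.succ i|) ≤ C * 1 := by
              refine mul_le_mul_of_nonneg_left (Real.iSup_le (fun i => ?_) zero_le_one) hC0.le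
              rw [DiagAux.coef_succ, DiagAux.abs_sgn]
          _ = C := mul_one C
      calc ‖∑ i : Fin n, DiagAux.coef b σ 0 i • x (i : ℕ)‖ *
            ∏ l : Fin m, ‖∑ i : Fin n, DiagAux.coef b σ l.succ i • x (i : ℕ)‖
          ≤ (C * A) * C ^ m := by
            refine mul_le_mul h0 ?_ (Finset.prod_nonneg fun l _ => norm_nonneg _)
              (mul_nonneg hC0.le hA0)
            calc ∏ l : Fin m, ‖∑ i : Fin n, DiagAux.coef b σ l.succ i • x (i : ℕ)‖
                ≤ ∏ _l : Fin m, C :=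
                  Finset.prod_le_prod (fun l _ => norm_nonneg _) (fun l _ => hsuc l)
              _ = C ^ m := by rw [Finset.prod_const, Finset.card_univ, Fintype.card_fin]
        _ = C ^ (m+1) * A := by ring
    have hcard : (Fintype.card (Fin m → Fin n → Bool) : ℝ) = 2 ^ (n*m) := by
      rw [Fintype.card_fun, Fintype.card_fun, Fintype.card_bool, Fintype.card_fin,
        Fintype.card_fin]
      push_cast
      rw [← pow_mul]
    calc ‖((2:ℝ)^(n*m))⁻¹‖ * projectiveSeminorm (∑ σ : Fin m → Fin n → Bool,
          tprod ℝ (fun j : Fin (m+1) => ∑ i : Fin n, DiagAux.coef b σ j i • x (i : ℕ)))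
        ≤ ((2:ℝ)^(n*m))⁻¹ * ∑ σ : Fin m → Fin n → Bool, (C ^ (m+1) * A) := by
          rw [Real.norm_eq_abs, abs_of_pos (by positivity)]
          refine mul_le_mul_of_nonneg_left ?_ (by positivity)
          exact le_trans (DiagAux.seminorm_sum_le _ _ _) (Finset.sum_le_sum fun σ _ => hbd σ)
      _ = C ^ (m+1) * A := by
          rw [Finset.sum_const, Finset.card_univ, nsmul_eq_mul, hcard, ← mul_assoc,
            inv_mul_cancel₀ h2, one_mul]
end
end
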